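/- arXiv:1504.06074 — 3 statements merged into one kernel-verified Lean document; each statement's English description precedes it below -/
import Mathlib

section
/- Let X be a real m×p matrix and let d_max > 0 be the largest eigenvalue of (1/m)XᵀX. Let σ² > 0 and ε > 0. If β⁰, β ∈ ℝ^p satisfy |β⁰_k − β_k| < √(2σ²ε/(m·p·d_max)) for every coordinate k = 1,…,p, then KL(N(Xβ⁰, σ²I_m) ‖ N(Xβ, σ²I_m)) < ε, and the variance under y ∼ N(Xβ⁰, σ²I_m) of the log-likelihood ratio of the two densities is strictly less than 2ε. -/
open MeasureTheory Matrix

/-- The Lebesgue density of the Gaussian measure `N(μ, σ²I_m)` on `ℝ^m`. -/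
noncomputable def gaussDensity (m : ℕ) (μ : Fin m → ℝ) (σ2 : ℝ) (y : Fin m → ℝ) : ℝ :=
  (2 * Real.pi * σ2) ^ (-(m : ℝ) / 2) * Real.exp (-(∑ i, (y i - μ i) ^ 2) / (2 * σ2))

/-- The Gaussian probability measure `N(μ, σ²I_m)` on `ℝ^m`, given by its density
with respect to Lebesgue measure. -/
noncomputable def gaussMeasure (m : ℕ) (μ : Fin m → ℝ) (σ2 : ℝ) : Measure (Fin m → ℝ) :=
  volume.withDensity fun y => ENNReal.ofReal (gaussDensity m μ σ2 y)

open scoped NNReal ENNReal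

noncomputable def phi1 (σ2 a : ℝ) (t : ℝ) : ℝ :=
  (2 * Real.pi * σ2) ^ (-(1:ℝ) / 2) * Real.exp (-((t - a) ^ 2) / (2 * σ2))

lemma twopis_pos {σ2 : ℝ} (hσ2 : 0 < σ2) : 0 < 2 * Real.pi * σ2 := by positivity

lemma phiC_mul_sqrt {σ2 : ℝ} (hσ2 : 0 < σ2) :
    (2 * Real.pi * σ2) ^ (-(1:ℝ) / 2) * Real.sqrt (2 * Real.pi * σ2) = 1 := by
  have h := twopis_pos hσ2
  rw [show (-(1:ℝ)/2) = -(1/2) by ring, Real.rpow_neg h.le, ← Real.sqrt_eq_rpow]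
  exact inv_mul_cancel₀ (by positivity)

lemma exp_arg_eq {σ2 : ℝ} (t : ℝ) : -(t ^ 2) / (2 * σ2) = -((2 * σ2)⁻¹ * t ^ 2) := by
  rw [div_eq_mul_inv]; ring

lemma core0 {σ2 : ℝ} (hσ2 : 0 < σ2) :
    ∫ t : ℝ, Real.exp (-((2 * σ2)⁻¹ * t ^ 2)) = Real.sqrt (2 * Real.pi * σ2) := by
  have := integral_gaussian (2 * σ2)⁻¹
  simp only [neg_mul] at this ⊢
  rw [this]
  congr 1
  rw [div_eq_mul_inv, inv_inv]
  ring

lemma core1 {σ2 : ℝ} :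
    ∫ t : ℝ, t * Real.exp (-((2 * σ2)⁻¹ * t ^ 2)) = 0 := by
  set f : ℝ → ℝ := fun t => t * Real.exp (-((2 * σ2)⁻¹ * t ^ 2)) with hf
  have h1 : ∫ t : ℝ, f (-t) = ∫ t : ℝ, f t := integral_neg_eq_self f volume
  have h2 : ∀ t, f (-t) = - f t := by intro t; simp [hf]
  simp only [h2, integral_neg] at h1
  linarith

lemma core2 {σ2 : ℝ} (hσ2 : 0 < σ2) :
    ∫ t : ℝ, t ^ 2 * Real.exp (-((2 * σ2)⁻¹ * t ^ 2)) = σ2 * Real.sqrt (2 * Real.pi * σ2) := by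
  set b : ℝ := (2 * σ2)⁻¹ with hbdef
  have hb : 0 < b := by positivity
  set v : ℝ → ℝ := fun x => Real.exp (-(b * x ^ 2)) with hv
  set v' : ℝ → ℝ := fun x => Real.exp (-(b * x ^ 2)) * (-b * (2 * x)) with hv'
  have hderiv : ∀ x : ℝ, HasDerivAt v (v' x) x := by
    intro x
    have hx : HasDerivAt (fun x : ℝ => -(b * x ^ 2)) (-b * (2 * x)) x := by
      have := (hasDerivAt_pow 2 x).const_mul (-b)
      simpa [pow_one] using this.congr_deriv (by push_cast; ring)
    exact hx.exp
  have h2' : Integrable (fun x : ℝ => x ^ 2 * Real.exp (-(b * x ^ 2))) := by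
    have h2 := integrable_rpow_mul_exp_neg_mul_sq hb (show (-1:ℝ) < 2 by norm_num)
    have he : ∀ x : ℝ, x ^ (2:ℝ) = x ^ (2:ℕ) := fun x => by
      rw [← Real.rpow_natCast x 2]; norm_num
    simpa [he, neg_mul] using h2
  have huv' : Integrable ((fun x : ℝ => x) * v') := by
    refine (h2'.const_mul (-(2*b))).congr (Filter.Eventually.of_forall fun x => ?_)
    simp only [Pi.mul_apply, hv']; ring
  have hu'v : Integrable ((fun _ : ℝ => (1:ℝ)) * v) := by
    refine (integrable_exp_neg_mul_sq hb).congr (Filter.Eventually.of_forall fun x => ?_)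
    simp only [Pi.mul_apply, hv', hv, neg_mul, one_mul]
  have huv : Integrable ((fun x : ℝ => x) * v) := by
    refine (integrable_mul_exp_neg_mul_sq hb).congr (Filter.Eventually.of_forall fun x => ?_)
    simp only [Pi.mul_apply, hv, neg_mul]
  have hparts := integral_mul_deriv_eq_deriv_mul_of_integrable
    (u := fun x : ℝ => x) (u' := fun _ => (1:ℝ)) (v := v) (v' := v')
    (fun x _ => hasDerivAt_id x) (fun x _ => hderiv x) huv' hu'v huv
  have hL : (fun x : ℝ => x * v' x) = fun x : ℝ => (-(2*b)) * (x ^ 2 * Real.exp (-(b * x ^ 2))) := by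
    funext x; simp only [hv']; ring
  rw [hL, integral_const_mul] at hparts
  simp only [one_mul] at hparts
  have h0 : ∫ x : ℝ, v x = Real.sqrt (2 * Real.pi * σ2) := by
    simp only [hv, hbdef]; exact core0 hσ2
  rw [h0] at hparts
  have hbne : b ≠ 0 := ne_of_gt hb
  have hI2 : ∫ x : ℝ, x ^ 2 * Real.exp (-(b * x ^ 2)) =
      Real.sqrt (2 * Real.pi * σ2) / (2 * b) := by
    field_simp at hparts ⊢
    linarith
  rw [hI2, hbdef]
  field_simp

lemma centered_integrable {σ2 : ℝ} (hσ2 : 0 < σ2) (n : ℕ) (hn : n ≤ 2) :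
    Integrable (fun t : ℝ => (2 * Real.pi * σ2) ^ (-(1:ℝ) / 2)
      * Real.exp (-(t ^ 2) / (2 * σ2)) * t ^ n) := by
  have hb : 0 < (2 * σ2)⁻¹ := by positivity
  have he : ∀ t : ℝ, Real.exp (-(t ^ 2) / (2 * σ2)) = Real.exp (-((2 * σ2)⁻¹ * t ^ 2)) := by
    intro t; rw [exp_arg_eq]
  interval_cases n
  · refine ((integrable_exp_neg_mul_sq hb).const_mul
      ((2 * Real.pi * σ2) ^ (-(1:ℝ)/2))).congr
      (Filter.Eventually.of_forall fun t => ?_)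
    simp only [he, neg_mul]; ring
  · refine ((integrable_mul_exp_neg_mul_sq hb).const_mul
      ((2 * Real.pi * σ2) ^ (-(1:ℝ)/2))).congr
      (Filter.Eventually.of_forall fun t => ?_)
    simp only [he, neg_mul]; ring
  · have h2 := integrable_rpow_mul_exp_neg_mul_sq hb (show (-1:ℝ) < 2 by norm_num)
    have hrw : ∀ x : ℝ, x ^ (2:ℝ) = x ^ (2:ℕ) := fun x => by
      rw [← Real.rpow_natCast x 2]; norm_num
    have h2' : Integrable (fun x : ℝ => x ^ 2 * Real.exp (-((2 * σ2)⁻¹ * x ^ 2))) := by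
      simpa [hrw, neg_mul] using h2
    refine (h2'.const_mul ((2 * Real.pi * σ2) ^ (-(1:ℝ)/2))).congr
      (Filter.Eventually.of_forall fun t => ?_)
    simp only [he, neg_mul]; ring

lemma centered_integral0 {σ2 : ℝ} (hσ2 : 0 < σ2) :
    ∫ t : ℝ, (2 * Real.pi * σ2) ^ (-(1:ℝ) / 2) * Real.exp (-(t ^ 2) / (2 * σ2)) * t ^ 0 = 1 := by
  simp only [pow_zero, mul_one, exp_arg_eq, integral_const_mul, core0 hσ2]
  exact phiC_mul_sqrt hσ2

lemma centered_integral1 {σ2 : ℝ} (hσ2 : 0 < σ2) :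
    ∫ t : ℝ, (2 * Real.pi * σ2) ^ (-(1:ℝ) / 2) * Real.exp (-(t ^ 2) / (2 * σ2)) * t ^ 1 = 0 := by
  have : (fun t : ℝ => (2 * Real.pi * σ2) ^ (-(1:ℝ) / 2) * Real.exp (-(t ^ 2) / (2 * σ2)) * t ^ 1)
      = fun t : ℝ => (2 * Real.pi * σ2) ^ (-(1:ℝ) / 2)
        * (t * Real.exp (-((2 * σ2)⁻¹ * t ^ 2))) := by
    funext t; rw [exp_arg_eq]; ring
  rw [this, integral_const_mul, core1, mul_zero]

lemma centered_integral2 {σ2 : ℝ} (hσ2 : 0 < σ2) :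
    ∫ t : ℝ, (2 * Real.pi * σ2) ^ (-(1:ℝ) / 2) * Real.exp (-(t ^ 2) / (2 * σ2)) * t ^ 2 = σ2 := by
  have : (fun t : ℝ => (2 * Real.pi * σ2) ^ (-(1:ℝ) / 2) * Real.exp (-(t ^ 2) / (2 * σ2)) * t ^ 2)
      = fun t : ℝ => (2 * Real.pi * σ2) ^ (-(1:ℝ) / 2)
        * (t ^ 2 * Real.exp (-((2 * σ2)⁻¹ * t ^ 2))) := by
    funext t; rw [exp_arg_eq]; ring
  rw [this, integral_const_mul, core2 hσ2, ← mul_assoc, mul_comm _ σ2, mul_assoc,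
    phiC_mul_sqrt hσ2, mul_one]

lemma phi_integrable {σ2 : ℝ} (hσ2 : 0 < σ2) (a : ℝ) (n : ℕ) (hn : n ≤ 2) :
    Integrable (fun t : ℝ => phi1 σ2 a t * (t - a) ^ n) := by
  have h := (centered_integrable hσ2 n hn).comp_sub_right a
  simpa [phi1, mul_assoc] using h

lemma phi_integral {σ2 : ℝ} (hσ2 : 0 < σ2) (a : ℝ) (n : ℕ) (hn : n ≤ 2) :
    ∫ t : ℝ, phi1 σ2 a t * (t - a) ^ n
      = if n = 0 then 1 else if n = 1 then 0 else σ2 := by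
  have h := integral_sub_right_eq_self (μ := volume)
    (fun t : ℝ => (2 * Real.pi * σ2) ^ (-(1:ℝ) / 2) * Real.exp (-(t ^ 2) / (2 * σ2)) * t ^ n) a
  have heq : (fun t : ℝ => phi1 σ2 a t * (t - a) ^ n)
      = fun t : ℝ => (2 * Real.pi * σ2) ^ (-(1:ℝ) / 2)
        * Real.exp (-((t - a) ^ 2) / (2 * σ2)) * (t - a) ^ n := by
    funext t; rw [phi1]
  rw [heq]
  rw [show (fun t : ℝ => (2 * Real.pi * σ2) ^ (-(1:ℝ) / 2)
        * Real.exp (-((t - a) ^ 2) / (2 * σ2)) * (t - a) ^ n)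
      = fun t : ℝ => (fun s : ℝ => (2 * Real.pi * σ2) ^ (-(1:ℝ) / 2)
        * Real.exp (-(s ^ 2) / (2 * σ2)) * s ^ n) (t - a) from rfl, h]
  interval_cases n
  · simpa using centered_integral0 hσ2
  · simpa using centered_integral1 hσ2
  · simpa using centered_integral2 hσ2

section ProdSec

variable {m : ℕ} {σ2 : ℝ} (μ0 : Fin m → ℝ)

lemma gaussDensity_eq_prod (hσ2 : 0 < σ2) (y : Fin m → ℝ) :
    gaussDensity m μ0 σ2 y = ∏ i, phi1 σ2 (μ0 i) (y i) := by
  unfold gaussDensity phi1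
  rw [Finset.prod_mul_distrib, Finset.prod_const, Finset.card_univ, Fintype.card_fin,
    ← Real.exp_sum]
  congr 1
  · rw [← Real.rpow_natCast ((2 * Real.pi * σ2) ^ (-(1:ℝ)/2)) m,
      ← Real.rpow_mul (twopis_pos hσ2).le]
    congr 1
    push_cast; ring
  · rw [← Finset.sum_div]
    rw [← Finset.sum_neg_distrib]

lemma gaussDensity_pos (hσ2 : 0 < σ2) (y : Fin m → ℝ) : 0 < gaussDensity m μ0 σ2 y := by
  unfold gaussDensity
  have := twopis_pos (σ2 := σ2) hσ2
  positivity

lemma P0 (hσ2 : 0 < σ2) :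
    Integrable (gaussDensity m μ0 σ2) ∧ ∫ y, gaussDensity m μ0 σ2 y = 1 := by
  have hf : ∀ i, Integrable (fun t => phi1 σ2 (μ0 i) t) := fun i => by
    simpa using phi_integrable hσ2 (μ0 i) 0 (by norm_num)
  have heq : gaussDensity m μ0 σ2 = fun y : Fin m → ℝ => ∏ i, phi1 σ2 (μ0 i) (y i) :=
    funext fun y => gaussDensity_eq_prod μ0 hσ2 y
  constructor
  · rw [heq]; exact Integrable.fintype_prod (𝕜 := ℝ) hf
  · rw [heq, integral_fintype_prod_volume_eq_prod (𝕜 := ℝ) (fun i => phi1 σ2 (μ0 i))]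
    refine Finset.prod_eq_one fun i _ => ?_
    simpa using phi_integral hσ2 (μ0 i) 0 (by norm_num)

lemma P1 (hσ2 : 0 < σ2) (i₀ : Fin m) :
    Integrable (fun y : Fin m → ℝ => gaussDensity m μ0 σ2 y * (y i₀ - μ0 i₀)) ∧
    ∫ y : Fin m → ℝ, gaussDensity m μ0 σ2 y * (y i₀ - μ0 i₀) = 0 := by
  set f : Fin m → ℝ → ℝ :=
    fun k t => phi1 σ2 (μ0 k) t * (if k = i₀ then t - μ0 k else 1) with hfdef
  have hf : ∀ k, Integrable (f k) := by
    intro k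
    by_cases hk : k = i₀
    · simp only [hfdef, hk, if_true]
      simpa [pow_one] using phi_integrable hσ2 (μ0 i₀) 1 (by norm_num)
    · simp only [hfdef, if_neg hk, mul_one]
      simpa using phi_integrable hσ2 (μ0 k) 0 (by norm_num)
  have heq : ∀ y : Fin m → ℝ,
      (∏ k, f k (y k)) = gaussDensity m μ0 σ2 y * (y i₀ - μ0 i₀) := by
    intro y
    rw [hfdef, Finset.prod_mul_distrib, ← gaussDensity_eq_prod μ0 hσ2 y]
    congr 1
    simp
  have hint := Integrable.fintype_prod (𝕜 := ℝ) hf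
  have hval := integral_fintype_prod_volume_eq_prod (𝕜 := ℝ) f
  constructor
  · exact hint.congr (Filter.Eventually.of_forall heq)
  · rw [← funext heq] at *
    rw [hval]
    refine Finset.prod_eq_zero (Finset.mem_univ i₀) ?_
    simpa [hfdef] using phi_integral hσ2 (μ0 i₀) 1 (by norm_num)

lemma P2diag (hσ2 : 0 < σ2) (i₀ : Fin m) :
    Integrable (fun y : Fin m → ℝ => gaussDensity m μ0 σ2 y * (y i₀ - μ0 i₀) ^ 2) ∧
    ∫ y : Fin m → ℝ, gaussDensity m μ0 σ2 y * (y i₀ - μ0 i₀) ^ 2 = σ2 := by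
  set f : Fin m → ℝ → ℝ :=
    fun k t => phi1 σ2 (μ0 k) t * (if k = i₀ then (t - μ0 k) ^ 2 else 1) with hfdef
  have hf : ∀ k, Integrable (f k) := by
    intro k
    by_cases hk : k = i₀
    · simp only [hfdef, hk, if_true]
      exact phi_integrable hσ2 (μ0 i₀) 2 (by norm_num)
    · simp only [hfdef, if_neg hk, mul_one]
      simpa using phi_integrable hσ2 (μ0 k) 0 (by norm_num)
  have heq : ∀ y : Fin m → ℝ,
      (∏ k, f k (y k)) = gaussDensity m μ0 σ2 y * (y i₀ - μ0 i₀) ^ 2 := by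
    intro y
    rw [hfdef, Finset.prod_mul_distrib, ← gaussDensity_eq_prod μ0 hσ2 y]
    congr 1
    simp
  have hint := Integrable.fintype_prod (𝕜 := ℝ) hf
  have hval := integral_fintype_prod_volume_eq_prod (𝕜 := ℝ) f
  constructor
  · exact hint.congr (Filter.Eventually.of_forall heq)
  · rw [← funext heq] at *
    rw [hval]
    have hfac : ∀ k : Fin m, ∫ t, f k t = if k = i₀ then σ2 else 1 := by
      intro k
      by_cases hk : k = i₀
      · simp only [hfdef, hk, if_true]
        simpa using phi_integral hσ2 (μ0 i₀) 2 (by norm_num)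
      · simp only [hfdef, if_neg hk, mul_one]
        simpa using phi_integral hσ2 (μ0 k) 0 (by norm_num)
    simp only [hfac]
    simp

lemma P2off (hσ2 : 0 < σ2) (i₀ j₀ : Fin m) (hij : i₀ ≠ j₀) :
    Integrable (fun y : Fin m → ℝ =>
      gaussDensity m μ0 σ2 y * ((y i₀ - μ0 i₀) * (y j₀ - μ0 j₀))) ∧
    ∫ y : Fin m → ℝ, gaussDensity m μ0 σ2 y * ((y i₀ - μ0 i₀) * (y j₀ - μ0 j₀)) = 0 := by
  set f : Fin m → ℝ → ℝ :=
    fun k t => phi1 σ2 (μ0 k) t *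
      ((if k = i₀ then t - μ0 k else 1) * (if k = j₀ then t - μ0 k else 1)) with hfdef
  have hf : ∀ k, Integrable (f k) := by
    intro k
    by_cases hk : k = i₀
    · subst hk
      simp only [hfdef, if_pos rfl, if_neg hij, mul_one]
      simpa [pow_one] using phi_integrable hσ2 (μ0 k) 1 (by norm_num)
    · by_cases hk' : k = j₀
      · subst hk'
        simp only [hfdef, if_neg hk, if_pos rfl, one_mul]
        simpa [pow_one] using phi_integrable hσ2 (μ0 k) 1 (by norm_num)
      · simp only [hfdef, if_neg hk, if_neg hk', mul_one]
        simpa using phi_integrable hσ2 (μ0 k) 0 (by norm_num)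
  have heq : ∀ y : Fin m → ℝ,
      (∏ k, f k (y k)) = gaussDensity m μ0 σ2 y * ((y i₀ - μ0 i₀) * (y j₀ - μ0 j₀)) := by
    intro y
    rw [hfdef, Finset.prod_mul_distrib, ← gaussDensity_eq_prod μ0 hσ2 y, Finset.prod_mul_distrib]
    congr 1
    congr 1 <;> simp
  have hint := Integrable.fintype_prod (𝕜 := ℝ) hf
  have hval := integral_fintype_prod_volume_eq_prod (𝕜 := ℝ) f
  constructor
  · exact hint.congr (Filter.Eventually.of_forall heq)
  · rw [← funext heq] at *
    rw [hval]
    refine Finset.prod_eq_zero (Finset.mem_univ i₀) ?_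
    have : i₀ ≠ j₀ := hij
    simpa [hfdef, if_neg this] using phi_integral hσ2 (μ0 i₀) 1 (by norm_num)

end ProdSec

lemma main_aux (m : ℕ) (σ2 ε : ℝ) (hσ2 : 0 < σ2) (hε : 0 < ε) (μ0 μ1 : Fin m → ℝ)
    (hS : ∑ i, (μ0 i - μ1 i) ^ 2 < 2 * σ2 * ε) :
    (∫ y, Real.log (gaussDensity m μ0 σ2 y / gaussDensity m μ1 σ2 y)
        ∂(gaussMeasure m μ0 σ2)) < ε ∧
    ProbabilityTheory.variance
        (fun y => Real.log (gaussDensity m μ0 σ2 y / gaussDensity m μ1 σ2 y))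
        (gaussMeasure m μ0 σ2) < 2 * ε := by
  set δ : Fin m → ℝ := fun i => μ0 i - μ1 i with hδdef
  set S : ℝ := ∑ i, δ i ^ 2 with hSdef
  have hSlt : S < 2 * σ2 * ε := hS
  have hSnn : 0 ≤ S := Finset.sum_nonneg fun i _ => sq_nonneg _
  set G : (Fin m → ℝ) → ℝ := fun y => ∑ i, δ i * (y i - μ0 i) with hGdef
  set c : ℝ := S / (2 * σ2) with hcdef
  set F : (Fin m → ℝ) → ℝ := fun y => σ2⁻¹ * G y + c with hFdef
  -- log-ratio identity
  have hlog : ∀ y : Fin m → ℝ,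
      Real.log (gaussDensity m μ0 σ2 y / gaussDensity m μ1 σ2 y) = F y := by
    intro y
    have hC : (0:ℝ) < (2 * Real.pi * σ2) ^ (-(m:ℝ)/2) :=
      Real.rpow_pos_of_pos (twopis_pos hσ2) _
    unfold gaussDensity
    rw [mul_div_mul_left _ _ (ne_of_gt hC), ← Real.exp_sub, Real.log_exp]
    rw [div_sub_div_same]
    have hdiff : -(∑ i, (y i - μ0 i) ^ 2) - -(∑ i, (y i - μ1 i) ^ 2) = 2 * G y + S := by
      have h1 : -(∑ i, (y i - μ0 i) ^ 2) - -(∑ i, (y i - μ1 i) ^ 2)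
          = ∑ i, ((y i - μ1 i) ^ 2 - (y i - μ0 i) ^ 2) := by
        rw [Finset.sum_sub_distrib]; ring
      rw [h1]
      have h2 : ∀ i : Fin m, (y i - μ1 i) ^ 2 - (y i - μ0 i) ^ 2
          = 2 * (δ i * (y i - μ0 i)) + δ i ^ 2 := fun i => by
        simp only [hδdef]; ring
      rw [Finset.sum_congr rfl fun i _ => h2 i, Finset.sum_add_distrib, ← Finset.mul_sum,
        hGdef, hSdef]
    rw [hdiff, hFdef, hcdef]
    field_simp
  have hfun : (fun y => Real.log (gaussDensity m μ0 σ2 y / gaussDensity m μ1 σ2 y)) = F :=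
    funext hlog
  -- measure plumbing
  have hmeas : Measurable (gaussDensity m μ0 σ2) := by
    unfold gaussDensity; fun_prop
  set ρ : (Fin m → ℝ) → ℝ≥0 := fun y => (gaussDensity m μ0 σ2 y).toNNReal with hρdef
  have hρmeas : Measurable ρ := hmeas.real_toNNReal
  have hPdef : gaussMeasure m μ0 σ2 = volume.withDensity (fun y => (ρ y : ℝ≥0∞)) := rfl
  have hcoe : ∀ y, (ρ y : ℝ) = gaussDensity m μ0 σ2 y :=
    fun y => Real.coe_toNNReal _ (gaussDensity_pos μ0 hσ2 y).le
  have hiff : ∀ g : (Fin m → ℝ) → ℝ,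
      Integrable (fun y => gaussDensity m μ0 σ2 y * g y) volume →
      Integrable g (gaussMeasure m μ0 σ2) := by
    intro g hg
    rw [hPdef, integrable_withDensity_iff_integrable_smul₀ hρmeas.aemeasurable]
    refine hg.congr (Filter.Eventually.of_forall fun y => ?_)
    simp only [NNReal.smul_def, smul_eq_mul, hcoe]
  have hval : ∀ g : (Fin m → ℝ) → ℝ,
      ∫ y, g y ∂(gaussMeasure m μ0 σ2) = ∫ y, gaussDensity m μ0 σ2 y * g y := by
    intro g
    rw [hPdef, integral_withDensity_eq_integral_smul₀ hρmeas.aemeasurable]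
    refine integral_congr_ae (Filter.Eventually.of_forall fun y => ?_)
    simp only [NNReal.smul_def, smul_eq_mul, hcoe]
  haveI hprob : IsProbabilityMeasure (gaussMeasure m μ0 σ2) := by
    constructor
    rw [gaussMeasure, withDensity_apply _ MeasurableSet.univ, Measure.restrict_univ,
      ← ofReal_integral_eq_lintegral_ofReal (P0 μ0 hσ2).1
        (Filter.Eventually.of_forall fun y => (gaussDensity_pos μ0 hσ2 y).le),
      (P0 μ0 hσ2).2, ENNReal.ofReal_one]
  -- integrals of G
  have hGsum : (fun y : Fin m → ℝ => gaussDensity m μ0 σ2 y * G y)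
      = fun y => ∑ i, δ i * (gaussDensity m μ0 σ2 y * (y i - μ0 i)) := by
    funext y
    rw [hGdef, Finset.mul_sum]
    exact Finset.sum_congr rfl fun i _ => by ring
  have hGint_vol : Integrable (fun y : Fin m → ℝ => gaussDensity m μ0 σ2 y * G y) := by
    rw [hGsum]
    exact integrable_finset_sum _ fun i _ => ((P1 μ0 hσ2 i).1.const_mul (δ i))
  have hGval_vol : ∫ y : Fin m → ℝ, gaussDensity m μ0 σ2 y * G y = 0 := by
    rw [hGsum, integral_finset_sum _ fun i _ => ((P1 μ0 hσ2 i).1.const_mul (δ i))]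
    exact Finset.sum_eq_zero fun i _ => by rw [integral_const_mul, (P1 μ0 hσ2 i).2, mul_zero]
  -- integrals of G^2
  have hterm : ∀ i j : Fin m, Integrable (fun y : Fin m → ℝ =>
      gaussDensity m μ0 σ2 y * ((y i - μ0 i) * (y j - μ0 j))) ∧
      (∫ y : Fin m → ℝ, gaussDensity m μ0 σ2 y * ((y i - μ0 i) * (y j - μ0 j)))
        = if i = j then σ2 else 0 := by
    intro i j
    by_cases hij : i = j
    · subst hij
      have h := P2diag μ0 hσ2 i
      have hrw : (fun y : Fin m → ℝ => gaussDensity m μ0 σ2 y * ((y i - μ0 i) * (y i - μ0 i)))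
          = fun y => gaussDensity m μ0 σ2 y * (y i - μ0 i) ^ 2 := by
        funext y; ring
      rw [hrw, if_pos rfl]
      exact h
    · refine ⟨(P2off μ0 hσ2 i j hij).1, ?_⟩
      rw [if_neg hij]
      exact (P2off μ0 hσ2 i j hij).2
  have hG2sum : (fun y : Fin m → ℝ => gaussDensity m μ0 σ2 y * G y ^ 2)
      = fun y => ∑ i, ∑ j, (δ i * δ j)
        * (gaussDensity m μ0 σ2 y * ((y i - μ0 i) * (y j - μ0 j))) := by
    funext y
    rw [hGdef, sq, Finset.sum_mul_sum, Finset.mul_sum]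
    refine Finset.sum_congr rfl fun i _ => ?_
    rw [Finset.mul_sum]
    exact Finset.sum_congr rfl fun j _ => by ring
  have hG2int_vol : Integrable (fun y : Fin m → ℝ => gaussDensity m μ0 σ2 y * G y ^ 2) := by
    rw [hG2sum]
    exact integrable_finset_sum _ fun i _ =>
      integrable_finset_sum _ fun j _ => ((hterm i j).1.const_mul _)
  have hG2val_vol : ∫ y : Fin m → ℝ, gaussDensity m μ0 σ2 y * G y ^ 2 = S * σ2 := by
    rw [hG2sum, integral_finset_sum _ fun i _ =>
      integrable_finset_sum _ fun j _ => ((hterm i j).1.const_mul _)]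
    have : ∀ i : Fin m, (∫ y : Fin m → ℝ, ∑ j, (δ i * δ j)
        * (gaussDensity m μ0 σ2 y * ((y i - μ0 i) * (y j - μ0 j)))) = δ i ^ 2 * σ2 := by
      intro i
      rw [integral_finset_sum _ fun j _ => ((hterm i j).1.const_mul _)]
      have : ∀ j : Fin m, (∫ y : Fin m → ℝ, (δ i * δ j)
          * (gaussDensity m μ0 σ2 y * ((y i - μ0 i) * (y j - μ0 j))))
          = if i = j then δ i ^ 2 * σ2 else 0 := by
        intro j
        rw [integral_const_mul, (hterm i j).2]
        by_cases hij : i = j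
        · subst hij; simp [sq]
        · simp [hij]
      rw [Finset.sum_congr rfl fun j _ => this j]
      simp
    rw [Finset.sum_congr rfl fun i _ => this i, ← Finset.sum_mul, hSdef]
  -- transfer to the Gaussian measure
  have hGP : Integrable G (gaussMeasure m μ0 σ2) := hiff G hGint_vol
  have hG2P : Integrable (fun y => G y ^ 2) (gaussMeasure m μ0 σ2) := hiff _ hG2int_vol
  have hGPval : ∫ y, G y ∂(gaussMeasure m μ0 σ2) = 0 := by rw [hval]; exact hGval_vol
  have hG2Pval : ∫ y, G y ^ 2 ∂(gaussMeasure m μ0 σ2) = S * σ2 := by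
    rw [hval]; exact hG2val_vol
  have hFint : Integrable F (gaussMeasure m μ0 σ2) := by
    rw [hFdef]
    exact (hGP.const_mul σ2⁻¹).add (integrable_const c)
  have hFval : ∫ y, F y ∂(gaussMeasure m μ0 σ2) = c := by
    rw [hFdef, integral_add (hGP.const_mul σ2⁻¹) (integrable_const c),
      integral_const_mul, hGPval, integral_const]
    simp
  constructor
  · rw [hfun, hFval, hcdef, div_lt_iff₀ (by positivity : (0:ℝ) < 2 * σ2)]
    nlinarith
  · -- variance
    have hGmeas : Measurable G := by
      rw [hGdef]
      exact Finset.measurable_sum _ fun i _ =>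
        (measurable_const.mul ((measurable_pi_apply i).sub measurable_const))
    have hFmeas : Measurable F := by
      rw [hFdef]
      exact (measurable_const.mul hGmeas).add measurable_const
    have hF2int : Integrable (fun y => F y ^ 2) (gaussMeasure m μ0 σ2) := by
      have hFsq : (fun y => F y ^ 2)
          = fun y => σ2⁻¹ ^ 2 * G y ^ 2 + ((2 * σ2⁻¹ * c) * G y + c ^ 2) := by
        funext y; rw [hFdef]; ring
      rw [hFsq]
      exact (hG2P.const_mul _).add ((hGP.const_mul _).add (integrable_const _))
    have hFmem : MeasureTheory.MemLp F 2 (gaussMeasure m μ0 σ2) :=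
      (memLp_two_iff_integrable_sq (hFmeas.aestronglyMeasurable)).2 hF2int
    rw [hfun, ProbabilityTheory.variance_eq_sub hFmem]
    have hF2val : ∫ y, (F ^ 2) y ∂(gaussMeasure m μ0 σ2) = S / σ2 + c ^ 2 := by
      have hFsq : ∀ y : Fin m → ℝ, (F ^ 2) y
          = σ2⁻¹ ^ 2 * G y ^ 2 + ((2 * σ2⁻¹ * c) * G y + c ^ 2) := by
        intro y; simp only [Pi.pow_apply]; rw [hFdef]; ring
      calc ∫ y, (F ^ 2) y ∂(gaussMeasure m μ0 σ2)
          = ∫ y, (σ2⁻¹ ^ 2 * G y ^ 2 + ((2 * σ2⁻¹ * c) * G y + c ^ 2))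
              ∂(gaussMeasure m μ0 σ2) :=
            integral_congr_ae (Filter.Eventually.of_forall hFsq)
        _ = σ2⁻¹ ^ 2 * (S * σ2) + ((2 * σ2⁻¹ * c) * 0 + c ^ 2) := by
            have h1 : Integrable (fun y => (2 * σ2⁻¹ * c) * G y + c ^ 2)
                (gaussMeasure m μ0 σ2) := (hGP.const_mul _).add (integrable_const _)
            rw [integral_add (hG2P.const_mul _) h1,
              integral_add (hGP.const_mul _) (integrable_const _),
              integral_const_mul, integral_const_mul, hGPval, hG2Pval, integral_const]
            simp
        _ = S / σ2 + c ^ 2 := by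
            field_simp
            ring
    rw [hF2val, hFval]
    have : S / σ2 + c ^ 2 - c ^ 2 = S / σ2 := by ring
    rw [this, div_lt_iff₀ hσ2]
    nlinarith

lemma rayleigh_le {p : ℕ} (A : Matrix (Fin p) (Fin p) ℝ) (hA : A.IsHermitian)
    {dmax : ℝ} (hub : ∀ i, hA.eigenvalues i ≤ dmax) (hd0 : 0 ≤ dmax) (v : Fin p → ℝ) :
    v ⬝ᵥ A.mulVec v ≤ dmax * (v ⬝ᵥ v) := by
  classical
  set U : Matrix (Fin p) (Fin p) ℝ := (hA.eigenvectorUnitary : Matrix (Fin p) (Fin p) ℝ)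
    with hU
  have hUnit : U * star U = 1 := (Matrix.mem_unitaryGroup_iff).mp hA.eigenvectorUnitary.2
  set w : Fin p → ℝ := (star U).mulVec v with hw
  have hstar : star U = Uᵀ := by
    rw [Matrix.star_eq_conjTranspose, Matrix.conjTranspose_eq_transpose_of_trivial]
  have hD : A = U * Matrix.diagonal hA.eigenvalues * star U := by
    have := hA.spectral_theorem
    simpa [RCLike.ofReal_real_eq_id] using this
  have hform : v ⬝ᵥ A.mulVec v = w ⬝ᵥ (Matrix.diagonal hA.eigenvalues).mulVec w := by
    conv_lhs => rw [hD]
    rw [← Matrix.mulVec_mulVec, ← Matrix.mulVec_mulVec]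
    rw [Matrix.dotProduct_mulVec v U]
    congr 1
    rw [hw, hstar, ← Matrix.mulVec_transpose]
  have hnorm : w ⬝ᵥ w = v ⬝ᵥ v := by
    rw [hw, Matrix.dotProduct_mulVec w (star U) v]
    congr 1
    rw [hstar, ← Matrix.mulVec_transpose, Matrix.transpose_transpose, hw, hstar,
      Matrix.mulVec_mulVec, ← hstar, hUnit, Matrix.one_mulVec]
  rw [hform, ← hnorm]
  have hterm : ∀ i : Fin p, w i * (Matrix.diagonal hA.eigenvalues).mulVec w i
      ≤ dmax * (w i * w i) := by
    intro i
    rw [Matrix.mulVec_diagonal]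
    have h1 : hA.eigenvalues i * (w i * w i) ≤ dmax * (w i * w i) :=
      mul_le_mul_of_nonneg_right (hub i) (mul_self_nonneg _)
    nlinarith [h1]
  calc w ⬝ᵥ (Matrix.diagonal hA.eigenvalues).mulVec w
      = ∑ i, w i * (Matrix.diagonal hA.eigenvalues).mulVec w i := rfl
    _ ≤ ∑ i, dmax * (w i * w i) := Finset.sum_le_sum fun i _ => hterm i
    _ = dmax * (w ⬝ᵥ w) := by rw [← Finset.mul_sum]; rfl

/-- If `d_max > 0` is the largest eigenvalue of `(1/m)XᵀX` and
`|β⁰_k - β_k| < √(2σ²ε/(m p d_max))` for every coordinate `k`, then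
`KL(N(Xβ⁰, σ²I_m) ‖ N(Xβ, σ²I_m)) < ε` and the variance under `N(Xβ⁰, σ²I_m)` of the
log-likelihood ratio of the two densities is `< 2ε`. -/
theorem kl_and_variance_small_of_coord_close (m p : ℕ) (X : Matrix (Fin m) (Fin p) ℝ)
    (σ2 ε dmax : ℝ) (hσ2 : 0 < σ2) (hε : 0 < ε)
    (hH : (((m : ℝ)⁻¹) • (Xᵀ * X)).IsHermitian)
    (hdmax : IsGreatest (Set.range hH.eigenvalues) dmax) (hdpos : 0 < dmax)
    (β0 β : Fin p → ℝ)
    (hβ : ∀ k, |β0 k - β k| < Real.sqrt (2 * σ2 * ε / (m * p * dmax))) :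
    (∫ y, Real.log (gaussDensity m (X.mulVec β0) σ2 y / gaussDensity m (X.mulVec β) σ2 y)
        ∂(gaussMeasure m (X.mulVec β0) σ2)) < ε ∧
    ProbabilityTheory.variance
        (fun y => Real.log
          (gaussDensity m (X.mulVec β0) σ2 y / gaussDensity m (X.mulVec β) σ2 y))
        (gaussMeasure m (X.mulVec β0) σ2) < 2 * ε := by
  have hkey : ∑ i, (X.mulVec β0 i - X.mulVec β i) ^ 2 < 2 * σ2 * ε := by
    set d : Fin p → ℝ := β0 - β with hd
    have hXd : ∀ i, X.mulVec β0 i - X.mulVec β i = X.mulVec d i := by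
      intro i
      rw [hd, Matrix.mulVec_sub]
      simp
    have hsum_eq : ∑ i, (X.mulVec β0 i - X.mulVec β i) ^ 2 = (X *ᵥ d) ⬝ᵥ (X *ᵥ d) := by
      rw [Finset.sum_congr rfl fun i _ => by rw [hXd i]]
      simp [dotProduct, sq]
    rw [hsum_eq]
    have hquad : (X *ᵥ d) ⬝ᵥ (X *ᵥ d) = d ⬝ᵥ ((Xᵀ * X) *ᵥ d) := by
      rw [Matrix.dotProduct_mulVec (X *ᵥ d) X d, ← Matrix.mulVec_transpose,
        Matrix.mulVec_mulVec]
      exact dotProduct_comm _ _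
    rw [hquad]
    rcases Nat.eq_zero_or_pos p with hp0 | hp
    · subst hp0
      have : (Xᵀ * X) *ᵥ d = 0 := by
        funext i; exact Fin.elim0 i
      rw [this]
      simp only [dotProduct_zero]
      positivity
    · rcases Nat.eq_zero_or_pos m with hm0 | hm
      · exfalso
        have h := hβ ⟨0, hp⟩
        rw [hm0] at h
        simp only [Nat.cast_zero, zero_mul, div_zero, Real.sqrt_zero] at h
        exact (abs_nonneg _).not_gt h
      · have hmR : (0:ℝ) < (m:ℝ) := by exact_mod_cast hm
        have hpR : (0:ℝ) < (p:ℝ) := by exact_mod_cast hp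
        set q : ℝ := 2 * σ2 * ε / (m * p * dmax) with hq
        have hqpos : 0 < q := by rw [hq]; positivity
        have hterm : ∀ k : Fin p, d k * d k < q := by
          intro k
          have h := hβ k
          have h' : |d k| < Real.sqrt q := h
          have := mul_self_lt_mul_self (abs_nonneg _) h'
          rwa [abs_mul_abs_self, Real.mul_self_sqrt hqpos.le] at this
        have hdd : d ⬝ᵥ d < p * q := by
          haveI : Nonempty (Fin p) := ⟨⟨0, hp⟩⟩
          have := Finset.sum_lt_sum_of_nonempty
            (Finset.univ_nonempty (α := Fin p)) fun k _ => hterm k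
          simpa [dotProduct, Finset.sum_const, Finset.card_univ, nsmul_eq_mul]
            using this
        have hray := rayleigh_le _ hH (fun i => hdmax.2 ⟨i, rfl⟩) hdpos.le d
        have hAv : ((m : ℝ)⁻¹ • (Xᵀ * X)) *ᵥ d = (m:ℝ)⁻¹ • ((Xᵀ * X) *ᵥ d) :=
          Matrix.smul_mulVec _ _ _
        rw [hAv, dotProduct_smul, smul_eq_mul] at hray
        have hQ : d ⬝ᵥ ((Xᵀ * X) *ᵥ d) ≤ (m:ℝ) * (dmax * (d ⬝ᵥ d)) := by
          have h2 := mul_le_mul_of_nonneg_left hray hmR.le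
          rwa [← mul_assoc, mul_inv_cancel₀ hmR.ne', one_mul] at h2
        have hfin : (m:ℝ) * (dmax * (d ⬝ᵥ d)) < 2 * σ2 * ε := by
          have h3 : (m:ℝ) * (dmax * (d ⬝ᵥ d)) < (m:ℝ) * (dmax * ((p:ℝ) * q)) := by
            apply mul_lt_mul_of_pos_left _ hmR
            exact mul_lt_mul_of_pos_left hdd hdpos
          have h4 : (m:ℝ) * (dmax * ((p:ℝ) * q)) = 2 * σ2 * ε := by
            rw [hq]
            field_simp
          linarith
        linarith
  exact main_aux m σ2 ε hσ2 hε (X.mulVec β0) (X.mulVec β) hkey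
end

section
/- Let X be a real m×p matrix with m ≥ p such that XᵀX is invertible, and let d_min > 0 be the smallest eigenvalue of (1/m)XᵀX. Let σ² > 0, ε > 0, β⁰ ∈ ℝ^p, and let β̂(y) = (XᵀX)⁻¹Xᵀy. Then for y ∼ N(Xβ⁰, σ²I_m), P(‖β̂(y) − β⁰‖₂ > ε√p/2) ≤ exp{−(ε²·d_min/(16σ²) − log 2/(2m))·m·p}. In particular, if m > 8(log 2)σ²/(ε²·d_min), this bound is strictly less than 1 and decays exponentially in m·p. -/
open MeasureTheory Matrix

section Aux

lemma quad_conj {n : ℕ} (M N : Matrix (Fin n) (Fin n) ℝ) (w : Fin n → ℝ) :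
    (N *ᵥ w) ⬝ᵥ (M *ᵥ (N *ᵥ w)) = w ⬝ᵥ ((Nᵀ * M * N) *ᵥ w) := by
  rw [mulVec_mulVec, Matrix.mul_assoc, ← mulVec_mulVec w Nᵀ (M * N),
    dotProduct_mulVec w Nᵀ, vecMul_transpose]

lemma quad_diag {n : ℕ} (d : Fin n → ℝ) (w : Fin n → ℝ) :
    w ⬝ᵥ ((diagonal d) *ᵥ w) = ∑ i, d i * w i ^ 2 := by
  simp only [dotProduct, mulVec_diagonal, sq]
  exact Finset.sum_congr rfl fun i _ => by ring

lemma quad_ge {n : ℕ} {A : Matrix (Fin n) (Fin n) ℝ} (hA : A.IsHermitian)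
    {d : ℝ} (hd : ∀ i, d ≤ hA.eigenvalues i) (v : Fin n → ℝ) :
    d * (v ⬝ᵥ v) ≤ v ⬝ᵥ (A *ᵥ v) := by
  set U : Matrix (Fin n) (Fin n) ℝ := (hA.eigenvectorUnitary : Matrix (Fin n) (Fin n) ℝ) with hUdef
  have hU1 : U * star U = 1 := Matrix.mem_unitaryGroup_iff.mp hA.eigenvectorUnitary.2
  have hstar : star U = Uᵀ := by
    rw [Matrix.star_eq_conjTranspose, conjTranspose_eq_transpose_of_trivial]
  have hspec : A = U * diagonal hA.eigenvalues * Uᵀ := by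
    have := hA.spectral_theorem
    rwa [RCLike.ofReal_real_eq_id, Function.id_comp, Unitary.conjStarAlgAut_apply, hstar] at this
  have hUT : (Uᵀ)ᵀ = U := transpose_transpose U
  have h1 : v ⬝ᵥ (A *ᵥ v) = ∑ i, hA.eigenvalues i * ((Uᵀ *ᵥ v) i) ^ 2 := by
    have hq := quad_conj (diagonal hA.eigenvalues) Uᵀ v
    rw [hUT] at hq
    have h0 : v ⬝ᵥ A *ᵥ v = (Uᵀ *ᵥ v) ⬝ᵥ (diagonal hA.eigenvalues *ᵥ (Uᵀ *ᵥ v)) := by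
      rw [hq, ← hspec]
    rw [h0, quad_diag]
  have h2 : v ⬝ᵥ v = ∑ i, ((Uᵀ *ᵥ v) i) ^ 2 := by
    have : (Uᵀ *ᵥ v) ⬝ᵥ ((1 : Matrix (Fin n) (Fin n) ℝ) *ᵥ (Uᵀ *ᵥ v))
        = v ⬝ᵥ (((Uᵀ)ᵀ * 1 * Uᵀ) *ᵥ v) := quad_conj _ _ v
    rw [hUT, Matrix.mul_one, ← hstar, hU1, one_mulVec, one_mulVec] at this
    rw [← this]
    simp [dotProduct, sq, hstar]
  rw [h1, h2, Finset.mul_sum]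
  apply Finset.sum_le_sum
  intro i _
  exact mul_le_mul_of_nonneg_right (hd i) (sq_nonneg _)

lemma lintegral_comp_mulVec {n : ℕ} (U : Matrix (Fin n) (Fin n) ℝ) (hdet : |U.det| = 1)
    (f : (Fin n → ℝ) → ENNReal) (hf : Measurable f) :
    ∫⁻ z, f z = ∫⁻ w, f (U *ᵥ w) := by
  have hd0 : U.det ≠ 0 := by
    intro h; rw [h] at hdet; simp at hdet
  have hmap : Measure.map (⇑(Matrix.toLin' U)) volume = volume := by
    rw [Real.map_matrix_volume_pi_eq_smul_volume_pi hd0]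
    rw [abs_inv, hdet]
    simp
  have hmeas : Measurable (⇑(Matrix.toLin' U)) :=
    (LinearMap.continuous_of_finiteDimensional (Matrix.toLin' U)).measurable
  calc ∫⁻ z, f z = ∫⁻ z, f z ∂(Measure.map (⇑(Matrix.toLin' U)) volume) := by rw [hmap]
    _ = ∫⁻ w, f (Matrix.toLin' U w) := lintegral_map hf hmeas
    _ = ∫⁻ w, f (U *ᵥ w) := by simp [Matrix.toLin'_apply]

lemma gauss_factor_integral {σ2 : ℝ} (hσ2 : 0 < σ2) {t : ℝ} (ht : t = 0 ∨ t = 1) :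
    ∫ x : ℝ, (2 * Real.pi * σ2) ^ (-(1:ℝ)/2) * Real.exp (-((2 - t) / (4 * σ2)) * x ^ 2)
      = Real.exp (t * Real.log 2 / 2) := by
  have hπ : 0 < 2 * Real.pi * σ2 := by positivity
  have hb : 0 < (2 - t) / (4 * σ2) := by
    rcases ht with h | h <;> rw [h] <;> positivity
  rw [integral_const_mul, integral_gaussian]
  rcases ht with h | h
  · subst h
    have : Real.pi / ((2 - 0) / (4 * σ2)) = 2 * Real.pi * σ2 := by
      field_simp; ring
    rw [this, Real.sqrt_eq_rpow, ← Real.rpow_add hπ]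
    norm_num
  · subst h
    have : Real.pi / ((2 - 1) / (4 * σ2)) = 2 * (2 * Real.pi * σ2) := by
      field_simp; ring
    rw [this, Real.sqrt_mul (by norm_num : (0:ℝ) ≤ 2), Real.sqrt_eq_rpow (2 * Real.pi * σ2),
      ← mul_assoc, mul_comm ((2 * Real.pi * σ2) ^ (-(1:ℝ)/2)) (Real.sqrt 2), mul_assoc,
      ← Real.rpow_add hπ]
    norm_num
    rw [Real.sqrt_eq_rpow, Real.rpow_def_of_pos (by norm_num : (0:ℝ) < 2)]
    ring_nf

lemma gauss_quad_lintegral {n : ℕ} {σ2 : ℝ} (hσ2 : 0 < σ2) (d : Fin n → ℝ)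
    (hd : ∀ i, d i = 0 ∨ d i = 1) :
    ∫⁻ w : Fin n → ℝ, ENNReal.ofReal ((2 * Real.pi * σ2) ^ (-(n:ℝ)/2) *
        Real.exp (-(∑ i, (2 - d i) * w i ^ 2) / (4 * σ2)))
      = ENNReal.ofReal (Real.exp ((∑ i, d i) * Real.log 2 / 2)) := by
  have hπ : 0 < 2 * Real.pi * σ2 := by positivity
  set c1 : ℝ := (2 * Real.pi * σ2) ^ (-(1:ℝ)/2) with hc1
  set h : Fin n → ℝ → ℝ := fun i x => c1 * Real.exp (-((2 - d i) / (4 * σ2)) * x ^ 2) with hh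
  have hfactor : ∀ w : Fin n → ℝ,
      (2 * Real.pi * σ2) ^ (-(n:ℝ)/2) * Real.exp (-(∑ i, (2 - d i) * w i ^ 2) / (4 * σ2))
        = ∏ i, h i (w i) := by
    intro w
    have hc : (2 * Real.pi * σ2) ^ (-(n:ℝ)/2) = ∏ _i : Fin n, c1 := by
      rw [Finset.prod_const, Finset.card_univ, Fintype.card_fin, hc1,
        ← Real.rpow_natCast ((2 * Real.pi * σ2) ^ (-(1:ℝ)/2)) n, ← Real.rpow_mul hπ.le]
      congr 1
      push_cast
      ring
    have he : Real.exp (-(∑ i, (2 - d i) * w i ^ 2) / (4 * σ2))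
        = ∏ i, Real.exp (-((2 - d i) / (4 * σ2)) * w i ^ 2) := by
      rw [← Real.exp_sum]
      congr 1
      have hterm : ∀ i, -((2 - d i) / (4 * σ2)) * w i ^ 2
          = -((2 - d i) * w i ^ 2) / (4 * σ2) := fun i => by ring
      simp_rw [hterm]
      rw [← Finset.sum_div, ← Finset.sum_neg_distrib]
    rw [hc, he, ← Finset.prod_mul_distrib]
  have hint : ∀ i, Integrable (h i) volume := by
    intro i
    have hb : 0 < (2 - d i) / (4 * σ2) := by
      rcases hd i with h0 | h0 <;> rw [h0] <;> positivity
    exact (integrable_exp_neg_mul_sq hb).const_mul c1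
  have hprod_int : Integrable (fun w : Fin n → ℝ => ∏ i, h i (w i)) volume :=
    MeasureTheory.Integrable.fintype_prod (𝕜 := ℝ) hint
  have hnonneg : ∀ i, ∀ x : ℝ, 0 ≤ h i x := fun i x => by
    apply mul_nonneg (Real.rpow_nonneg hπ.le _) (Real.exp_nonneg _)
  calc ∫⁻ w : Fin n → ℝ, ENNReal.ofReal ((2 * Real.pi * σ2) ^ (-(n:ℝ)/2) *
        Real.exp (-(∑ i, (2 - d i) * w i ^ 2) / (4 * σ2)))
      = ∫⁻ w : Fin n → ℝ, ENNReal.ofReal (∏ i, h i (w i)) := by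
        congr 1; funext w; rw [hfactor w]
    _ = ENNReal.ofReal (∫ w : Fin n → ℝ, ∏ i, h i (w i)) := by
        rw [MeasureTheory.ofReal_integral_eq_lintegral_ofReal hprod_int]
        exact Filter.Eventually.of_forall fun w => Finset.prod_nonneg fun i _ => hnonneg i (w i)
    _ = ENNReal.ofReal (∏ i, ∫ x : ℝ, h i x) := by
        exact congrArg ENNReal.ofReal (MeasureTheory.integral_fintype_prod_eq_prod h)
    _ = ENNReal.ofReal (Real.exp ((∑ i, d i) * Real.log 2 / 2)) := by
        congr 1
        have : ∀ i, ∫ x : ℝ, h i x = Real.exp (d i * Real.log 2 / 2) := fun i =>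
          gauss_factor_integral hσ2 (hd i)
        rw [Finset.prod_congr rfl fun i _ => this i, ← Real.exp_sum]
        congr 1
        rw [Finset.sum_mul, Finset.sum_div]
end Aux


/-- The ordinary least squares estimator `β̂(y) = (XᵀX)⁻¹Xᵀy`. -/
noncomputable def ols (m p : ℕ) (X : Matrix (Fin m) (Fin p) ℝ) (y : Fin m → ℝ) :
    Fin p → ℝ :=
  ((Xᵀ * X)⁻¹).mulVec (Xᵀ.mulVec y)

set_option maxHeartbeats 800000 in
/-- If `d_min > 0` is the smallest eigenvalue of `(1/m)XᵀX` then, under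
`y ∼ N(Xβ⁰, σ²I_m)`, `P(‖β̂(y)-β⁰‖₂ > ε√p/2) ≤ exp{-(ε²d_min/(16σ²) - log 2/(2m)) m p}`;
in particular if `m > 8(log 2)σ²/(ε²d_min)` this bound is strictly less than `1`
(the exponent rate `ε²d_min/(16σ²) - log 2/(2m)` being strictly positive, the bound
decays exponentially in `m·p`). -/
theorem ols_deviation_bound_null (m p : ℕ) (hmp : p ≤ m)
    (X : Matrix (Fin m) (Fin p) ℝ) (hX : IsUnit (Xᵀ * X).det)
    (dmin σ2 ε : ℝ) (hσ2 : 0 < σ2) (hε : 0 < ε)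
    (hH : (((m : ℝ)⁻¹) • (Xᵀ * X)).IsHermitian)
    (hdmin : IsLeast (Set.range hH.eigenvalues) dmin) (hdpos : 0 < dmin)
    (β0 : Fin p → ℝ) :
    gaussMeasure m (X.mulVec β0) σ2
        {y | ε * Real.sqrt p / 2 < Real.sqrt (∑ k, (ols m p X y k - β0 k) ^ 2)}
      ≤ ENNReal.ofReal
          (Real.exp (-(ε ^ 2 * dmin / (16 * σ2) - Real.log 2 / (2 * m)) * m * p)) ∧
    (8 * Real.log 2 * σ2 / (ε ^ 2 * dmin) < (m : ℝ) →
      0 < ε ^ 2 * dmin / (16 * σ2) - Real.log 2 / (2 * m) ∧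
      Real.exp (-(ε ^ 2 * dmin / (16 * σ2) - Real.log 2 / (2 * m)) * m * p) < 1) := by
  obtain ⟨i0, hi0⟩ := hdmin.1
  have hp : 0 < p := i0.pos
  have hm : 0 < m := lt_of_lt_of_le hp hmp
  have hmR : (0:ℝ) < m := by exact_mod_cast hm
  have hpR : (0:ℝ) < p := by exact_mod_cast hp
  have hlog2 : 0 < Real.log 2 := Real.log_pos (by norm_num)
  constructor
  · -- main bound
    classical
    set a := Xᵀ * X with ha
    have ha1 : a⁻¹ * a = 1 := nonsing_inv_mul a hX
    have ha2 : a * a⁻¹ = 1 := mul_nonsing_inv a hX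
    have haT : aᵀ = a := by rw [ha, transpose_mul, transpose_transpose]
    have haiT : (a⁻¹)ᵀ = a⁻¹ := by rw [transpose_nonsing_inv, haT]
    set P := X * a⁻¹ * Xᵀ with hP
    have hPh : P.IsHermitian := by
      unfold Matrix.IsHermitian
      rw [conjTranspose_eq_transpose_of_trivial, hP, transpose_mul, transpose_mul,
        transpose_transpose, haiT, Matrix.mul_assoc]
    have hPP : P * P = P := by
      have h0 : P * P = X * (a⁻¹ * a) * (a⁻¹ * Xᵀ) := by
        simp only [hP, ha, Matrix.mul_assoc]
      rw [h0, ha1, Matrix.mul_one, ← Matrix.mul_assoc]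
    set U : Matrix (Fin m) (Fin m) ℝ := (hPh.eigenvectorUnitary : Matrix (Fin m) (Fin m) ℝ)
      with hU
    set ev : Fin m → ℝ := hPh.eigenvalues with hev
    have hU1 : U * star U = 1 := Matrix.mem_unitaryGroup_iff.mp hPh.eigenvectorUnitary.2
    have hU2 : star U * U = 1 := Matrix.mem_unitaryGroup_iff'.mp hPh.eigenvectorUnitary.2
    have hstar : star U = Uᵀ := by
      rw [Matrix.star_eq_conjTranspose, conjTranspose_eq_transpose_of_trivial]
    have hDiag : star U * P * U = diagonal ev := by
      have h0 := hPh.conjStarAlgAut_star_eigenvectorUnitary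
      rwa [Unitary.conjStarAlgAut_star_apply, RCLike.ofReal_real_eq_id, Function.id_comp] at h0
    have heig01 : ∀ i, ev i = 0 ∨ ev i = 1 := by
      have h2 : (star U * P * U) * (star U * P * U) = star U * P * U := by
        calc (star U * P * U) * (star U * P * U)
            = star U * P * ((U * star U) * (P * U)) := by simp only [Matrix.mul_assoc]
          _ = star U * P * (P * U) := by rw [hU1, Matrix.one_mul]
          _ = star U * ((P * P) * U) := by simp only [Matrix.mul_assoc]
          _ = star U * P * U := by rw [hPP, ← Matrix.mul_assoc]
      rw [hDiag, diagonal_mul_diagonal] at h2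
      intro i
      have h3 : ev i * ev i = ev i := by
        have h4 := congr_fun (congr_fun h2 i) i
        simpa using h4
      rcases mul_eq_zero.mp (show ev i * (ev i - 1) = 0 by nlinarith) with h5 | h5
      · exact Or.inl h5
      · exact Or.inr (by linarith)
    have htr : ∑ i, ev i = (p : ℝ) := by
      have hspec : P = U * diagonal ev * star U := by
        have h0 := hPh.spectral_theorem
        rwa [RCLike.ofReal_real_eq_id, Function.id_comp, Unitary.conjStarAlgAut_apply] at h0
      have t1 : P.trace = ∑ i, ev i := by
        rw [hspec, trace_mul_comm, ← Matrix.mul_assoc, hU2, Matrix.one_mul, trace_diagonal]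
      have t2 : P.trace = (p : ℝ) := by
        rw [hP, trace_mul_comm, ← Matrix.mul_assoc, ← ha, ha2, trace_one]
        simp
      rw [← t1, t2]
    have hdetU : |U.det| = 1 := by
      have h1 : U.det * U.det = 1 := by
        have h0 := congrArg Matrix.det hU1
        rwa [det_mul, det_one, hstar, det_transpose] at h0
      rcases mul_self_eq_one_iff.mp h1 with h | h <;> rw [h] <;> norm_num
    clear_value U ev
    have hray : ∀ v : Fin p → ℝ, (m : ℝ) * dmin * (v ⬝ᵥ v) ≤ v ⬝ᵥ (a *ᵥ v) := by
      intro v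
      have h1 := quad_ge hH (fun i => hdmin.2 (Set.mem_range_self i)) v
      have h2 : v ⬝ᵥ ((((m : ℝ)⁻¹) • a) *ᵥ v) = (m : ℝ)⁻¹ * (v ⬝ᵥ (a *ᵥ v)) := by
        rw [smul_mulVec, dotProduct_smul, smul_eq_mul]
      rw [h2] at h1
      calc (m : ℝ) * dmin * (v ⬝ᵥ v) = (m : ℝ) * (dmin * (v ⬝ᵥ v)) := by ring
        _ ≤ (m : ℝ) * ((m : ℝ)⁻¹ * (v ⬝ᵥ (a *ᵥ v))) := by
            exact mul_le_mul_of_nonneg_left h1 hmR.le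
        _ = v ⬝ᵥ (a *ᵥ v) := by field_simp
    -- measurability of the event
    set E := {y : Fin m → ℝ |
        ε * Real.sqrt p / 2 < Real.sqrt (∑ k, (ols m p X y k - β0 k) ^ 2)} with hEdef
    have hols_meas : ∀ k, Measurable fun y : Fin m → ℝ => ols m p X y k := by
      intro k
      simp only [ols, Matrix.mulVec, dotProduct]
      apply Finset.measurable_sum
      intro j _
      apply Measurable.const_mul
      apply Finset.measurable_sum
      intro l _
      exact (measurable_pi_apply l).const_mul _
    have hEmeas : MeasurableSet E := by
      apply measurableSet_lt measurable_const
      exact Real.continuous_sqrt.measurable.comp (Finset.measurable_sum _ fun k _ =>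
        ((hols_meas k).sub measurable_const).pow_const 2)
    set c : ℝ := (2 * Real.pi * σ2) ^ (-(m : ℝ) / 2) with hc
    have hc0 : 0 ≤ c := Real.rpow_nonneg (by positivity) _
    set B : Matrix (Fin m) (Fin m) ℝ := (2 : ℝ) • (1 : Matrix (Fin m) (Fin m) ℝ) - P with hB
    set K : ℝ := (m : ℝ) * dmin * ε ^ 2 * p / (16 * σ2) with hK
    set f : (Fin m → ℝ) → ENNReal :=
      fun y => ENNReal.ofReal (gaussDensity m (X *ᵥ β0) σ2 y) with hf
    set G : (Fin m → ℝ) → ENNReal :=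
      fun z => ENNReal.ofReal (c * Real.exp (-(z ⬝ᵥ (B *ᵥ z)) / (4 * σ2))) with hG
    have hBz : ∀ z : Fin m → ℝ, z ⬝ᵥ (B *ᵥ z) = 2 * (z ⬝ᵥ z) - z ⬝ᵥ (P *ᵥ z) := by
      intro z
      rw [hB, sub_mulVec, smul_mulVec, one_mulVec, dotProduct_sub, dotProduct_smul,
        smul_eq_mul]
    have hpt : ∀ z : Fin m → ℝ,
        Set.indicator E f (z + X *ᵥ β0) ≤ ENNReal.ofReal (Real.exp (-K)) * G z := by
      intro z
      by_cases hz : z + X *ᵥ β0 ∈ E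
      · rw [Set.indicator_of_mem hz]
        set v : Fin p → ℝ := a⁻¹ *ᵥ (Xᵀ *ᵥ z) with hv
        have hols_shift : ols m p X (z + X *ᵥ β0) = v + β0 := by
          show a⁻¹ *ᵥ (Xᵀ *ᵥ (z + X *ᵥ β0)) = v + β0
          have e1 : Xᵀ *ᵥ (z + X *ᵥ β0) = Xᵀ *ᵥ z + a *ᵥ β0 := by
            rw [mulVec_add, mulVec_mulVec, ← ha]
          rw [e1, mulVec_add, mulVec_mulVec β0 a⁻¹ a, ha1, one_mulVec, ← hv]
        have hz' : ε * Real.sqrt p / 2 < Real.sqrt (∑ k, v k ^ 2) := by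
          have h0 : z + X *ᵥ β0 ∈ E := hz
          rw [hEdef] at h0
          simp only [Set.mem_setOf_eq, hols_shift, Pi.add_apply, add_sub_cancel_right] at h0
          exact h0
        have hvv : ε ^ 2 * p / 4 < v ⬝ᵥ v := by
          have h0 : (0:ℝ) ≤ ε * Real.sqrt p / 2 := by positivity
          have h1 := (Real.lt_sqrt h0).mp hz'
          have h2 : (ε * Real.sqrt p / 2) ^ 2 = ε ^ 2 * p / 4 := by
            rw [div_pow, mul_pow, Real.sq_sqrt hpR.le]
            norm_num
          have h3 : ∑ k, v k ^ 2 = v ⬝ᵥ v := by simp [dotProduct, sq]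
          rw [h2, h3] at h1
          exact h1
        have hq : z ⬝ᵥ (P *ᵥ z) = v ⬝ᵥ (a *ᵥ v) := by
          have hPz : P *ᵥ z = X *ᵥ (a⁻¹ *ᵥ (Xᵀ *ᵥ z)) := by
            rw [hP, ← mulVec_mulVec, ← mulVec_mulVec]
          have hav : a *ᵥ v = Xᵀ *ᵥ z := by
            rw [hv, mulVec_mulVec, ha2, one_mulVec]
          calc z ⬝ᵥ (P *ᵥ z) = z ⬝ᵥ (X *ᵥ v) := by rw [hPz, ← hv]
            _ = (z ᵥ* X) ⬝ᵥ v := dotProduct_mulVec z X v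
            _ = (Xᵀ *ᵥ z) ⬝ᵥ v := by rw [← transpose_transpose X, vecMul_transpose,
                transpose_transpose]
            _ = (a *ᵥ v) ⬝ᵥ v := by rw [hav]
            _ = v ⬝ᵥ (a *ᵥ v) := dotProduct_comm _ _
        have hqlb : 4 * σ2 * K ≤ z ⬝ᵥ (P *ᵥ z) := by
          rw [hq]
          have h1 : (m : ℝ) * dmin * (ε ^ 2 * p / 4) ≤ (m : ℝ) * dmin * (v ⬝ᵥ v) :=
            mul_le_mul_of_nonneg_left hvv.le (by positivity)
          have h2 := hray v
          have h3 : 4 * σ2 * K = (m : ℝ) * dmin * (ε ^ 2 * p / 4) := by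
            rw [hK]; field_simp; ring
          linarith
        have hdens : gaussDensity m (X *ᵥ β0) σ2 (z + X *ᵥ β0)
            = c * Real.exp (-(z ⬝ᵥ z) / (2 * σ2)) := by
          simp only [gaussDensity, Pi.add_apply, add_sub_cancel_right, hc]
          congr 2
          simp [dotProduct, sq]
        have hrealineq : c * Real.exp (-(z ⬝ᵥ z) / (2 * σ2))
            ≤ Real.exp (-K) * (c * Real.exp (-(z ⬝ᵥ (B *ᵥ z)) / (4 * σ2))) := by
          have hsplit : Real.exp (-(z ⬝ᵥ z) / (2 * σ2))
              = Real.exp (-(z ⬝ᵥ (B *ᵥ z)) / (4 * σ2))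
                * Real.exp (-(z ⬝ᵥ (P *ᵥ z)) / (4 * σ2)) := by
            rw [← Real.exp_add]
            congr 1
            rw [hBz z]
            field_simp
            ring
          have hexp2 : Real.exp (-(z ⬝ᵥ (P *ᵥ z)) / (4 * σ2)) ≤ Real.exp (-K) := by
            apply Real.exp_le_exp.mpr
            rw [neg_div, neg_le_neg_iff, le_div_iff₀ (by positivity : (0:ℝ) < 4 * σ2)]
            linarith
          calc c * Real.exp (-(z ⬝ᵥ z) / (2 * σ2))
              = c * Real.exp (-(z ⬝ᵥ (B *ᵥ z)) / (4 * σ2))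
                * Real.exp (-(z ⬝ᵥ (P *ᵥ z)) / (4 * σ2)) := by rw [hsplit]; ring
            _ ≤ c * Real.exp (-(z ⬝ᵥ (B *ᵥ z)) / (4 * σ2)) * Real.exp (-K) := by
                apply mul_le_mul_of_nonneg_left hexp2 (by positivity)
            _ = Real.exp (-K) * (c * Real.exp (-(z ⬝ᵥ (B *ᵥ z)) / (4 * σ2))) := by ring
        calc f (z + X *ᵥ β0) = ENNReal.ofReal (c * Real.exp (-(z ⬝ᵥ z) / (2 * σ2))) := by
              rw [hf]; exact congrArg ENNReal.ofReal hdens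
          _ ≤ ENNReal.ofReal (Real.exp (-K) * (c * Real.exp (-(z ⬝ᵥ (B *ᵥ z)) / (4 * σ2)))) :=
              ENNReal.ofReal_le_ofReal hrealineq
          _ = ENNReal.ofReal (Real.exp (-K)) * G z := by
              rw [hG, ENNReal.ofReal_mul (Real.exp_nonneg _)]
      · rw [Set.indicator_of_notMem hz]
        exact zero_le
    -- the lintegral of G
    have hquadG : Continuous fun z : Fin m → ℝ => z ⬝ᵥ (B *ᵥ z) := by
      simp only [Matrix.mulVec, dotProduct]
      apply continuous_finset_sum
      intro i _
      exact (continuous_apply i).mul (continuous_finset_sum _ fun j _ =>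
        continuous_const.mul (continuous_apply j))
    have hGmeas : Measurable G := by
      apply ENNReal.measurable_ofReal.comp
      apply Measurable.const_mul
      exact (Real.continuous_exp.comp ((hquadG.neg).div_const _)).measurable
    have hUBU : Uᵀ * B * U = diagonal (fun i => 2 - ev i) := by
      rw [← hstar, hB, Matrix.mul_sub, Matrix.sub_mul, hDiag]
      have h1 : star U * ((2:ℝ) • (1 : Matrix (Fin m) (Fin m) ℝ)) * U = (2:ℝ) • (1 : Matrix (Fin m) (Fin m) ℝ) := by
        rw [Matrix.mul_smul, Matrix.mul_one, Matrix.smul_mul, hU2]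
      rw [h1]
      ext i j
      by_cases hij : i = j
      · subst hij; simp [Matrix.smul_apply, Matrix.one_apply, diagonal]
      · simp [Matrix.smul_apply, Matrix.one_apply, diagonal, hij]
    clear_value a P B c f G
    have hGint : ∫⁻ z, G z = ENNReal.ofReal (Real.exp ((p : ℝ) * Real.log 2 / 2)) := by
      rw [lintegral_comp_mulVec U hdetU G hGmeas]
      have hGU : ∀ w : Fin m → ℝ, G (U *ᵥ w)
          = ENNReal.ofReal ((2 * Real.pi * σ2) ^ (-(m : ℝ) / 2) *
              Real.exp (-(∑ i, (2 - ev i) * w i ^ 2) / (4 * σ2))) := by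
        intro w
        rw [hG, hc]
        beta_reduce
        have hq2 : (U *ᵥ w) ⬝ᵥ (B *ᵥ (U *ᵥ w)) = ∑ i, (2 - ev i) * w i ^ 2 := by
          rw [quad_conj, hUBU, quad_diag]
        rw [hq2]
      simp_rw [hGU]
      rw [gauss_quad_lintegral hσ2 ev heig01, htr]
    -- final chain
    calc gaussMeasure m (X *ᵥ β0) σ2 E
        = ∫⁻ y, Set.indicator E f y := by
          rw [gaussMeasure, ← hf, withDensity_apply _ hEmeas, ← lintegral_indicator hEmeas]
      _ = ∫⁻ z, Set.indicator E f (z + X *ᵥ β0) := by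
          rw [lintegral_add_right_eq_self (fun y => Set.indicator E f y) (X *ᵥ β0)]
      _ ≤ ∫⁻ z, ENNReal.ofReal (Real.exp (-K)) * G z := lintegral_mono hpt
      _ = ENNReal.ofReal (Real.exp (-K)) * ∫⁻ z, G z := lintegral_const_mul' _ _ (by simp)
      _ = ENNReal.ofReal (Real.exp (-K)) * ENNReal.ofReal (Real.exp ((p : ℝ) * Real.log 2 / 2)) := by
          rw [hGint]
      _ = ENNReal.ofReal (Real.exp (-K + (p : ℝ) * Real.log 2 / 2)) := by
          rw [← ENNReal.ofReal_mul (Real.exp_nonneg _), Real.exp_add]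
      _ = ENNReal.ofReal
          (Real.exp (-(ε ^ 2 * dmin / (16 * σ2) - Real.log 2 / (2 * m)) * m * p)) := by
          congr 2
          rw [hK]
          field_simp
          ring
  · -- easy part
    intro h
    have hrate : 0 < ε ^ 2 * dmin / (16 * σ2) - Real.log 2 / (2 * m) := by
      rw [sub_pos, div_lt_div_iff₀ (by positivity) (by positivity)]
      rw [div_lt_iff₀ (by positivity)] at h
      nlinarith
    refine ⟨hrate, ?_⟩
    rw [Real.exp_lt_one_iff]
    have : 0 < (ε ^ 2 * dmin / (16 * σ2) - Real.log 2 / (2 * m)) * m * p := by positivity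
    linarith
end

section
/- Let X be a real m×p matrix with m ≥ p such that XᵀX is invertible, and let d_min > 0 be the smallest eigenvalue of (1/m)XᵀX. Let σ² > 0, ε > 0, and let β⁰, β¹ ∈ ℝ^p satisfy ‖β¹ − β⁰‖₂ ≥ ε√p. Let β̂(y) = (XᵀX)⁻¹Xᵀy. Then for y ∼ N(Xβ¹, σ²I_m), P(‖β̂(y) − β⁰‖₂ ≤ ε√p/2) ≤ exp{−(ε²·d_min/(16σ²) − log 2/(2m))·m·p}. -/
open MeasureTheory Matrix

lemma dot_star_unitary {n : ℕ} {U : Matrix (Fin n) (Fin n) ℝ}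
    (hU : U ∈ Matrix.unitaryGroup (Fin n) ℝ) (v : Fin n → ℝ) :
    ((star U) *ᵥ v) ⬝ᵥ ((star U) *ᵥ v) = v ⬝ᵥ v := by
  have h1 : (star U)ᵀ = U := by
    rw [Matrix.star_eq_conjTranspose, Matrix.conjTranspose_eq_transpose_of_trivial,
      Matrix.transpose_transpose]
  rw [Matrix.dotProduct_mulVec, ← Matrix.mulVec_transpose, h1, Matrix.mulVec_mulVec,
    (Matrix.mem_unitaryGroup_iff).mp hU, Matrix.one_mulVec]

lemma quadform_eigen {n : ℕ} {A : Matrix (Fin n) (Fin n) ℝ} (hA : A.IsHermitian) (v : Fin n → ℝ) :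
    v ⬝ᵥ (A *ᵥ v) = ∑ i, hA.eigenvalues i *
      ((star (hA.eigenvectorUnitary : Matrix (Fin n) (Fin n) ℝ)) *ᵥ v) i ^ 2 := by
  set U : Matrix (Fin n) (Fin n) ℝ := (hA.eigenvectorUnitary : Matrix (Fin n) (Fin n) ℝ) with hUdef
  set w : Fin n → ℝ := (star U) *ᵥ v with hw
  have hsp := hA.spectral_theorem
  have h1 : v ᵥ* U = w := by
    rw [hw, Matrix.star_eq_conjTranspose, Matrix.conjTranspose_eq_transpose_of_trivial,
      Matrix.mulVec_transpose]
  calc v ⬝ᵥ (A *ᵥ v)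
      = v ⬝ᵥ ((U * diagonal (RCLike.ofReal ∘ hA.eigenvalues) * (star U)) *ᵥ v) := by
          conv_lhs => rw [hsp, Unitary.conjStarAlgAut_apply]
    _ = (v ᵥ* U) ⬝ᵥ ((diagonal (RCLike.ofReal ∘ hA.eigenvalues)) *ᵥ w) := by
        rw [← Matrix.mulVec_mulVec, ← Matrix.mulVec_mulVec, Matrix.dotProduct_mulVec, hw]
    _ = ∑ i, hA.eigenvalues i * w i ^ 2 := by
        rw [h1]
        simp only [dotProduct, Matrix.mulVec_diagonal, Function.comp_apply,
          RCLike.ofReal_real_eq_id, id_eq]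
        exact Finset.sum_congr rfl fun i _ => by ring

lemma continuous_mulVec' {a b : ℕ} (N : Matrix (Fin a) (Fin b) ℝ) :
    Continuous fun v : Fin b → ℝ => N *ᵥ v := by
  refine continuous_pi fun i => ?_
  simp only [Matrix.mulVec, dotProduct]
  exact continuous_finset_sum _ fun j _ => (continuous_const.mul (continuous_apply j))

lemma continuous_quadform {n : ℕ} (M : Matrix (Fin n) (Fin n) ℝ) :
    Continuous fun ξ : Fin n → ℝ => ξ ⬝ᵥ (M *ᵥ ξ) := by
  simp only [dotProduct]
  exact continuous_finset_sum _ fun i _ =>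
    (continuous_apply i).mul ((continuous_apply i).comp (continuous_mulVec' M))

lemma prod_sqrt {ι : Type*} (s : Finset ι) (f : ι → ℝ) (hf : ∀ i ∈ s, 0 ≤ f i) :
    ∏ i ∈ s, Real.sqrt (f i) = Real.sqrt (∏ i ∈ s, f i) := by
  induction s using Finset.cons_induction with
  | empty => simp
  | cons a s ha ih =>
    rw [Finset.prod_cons, Finset.prod_cons,
      ih (fun i hi => hf i (Finset.mem_cons.mpr (Or.inr hi))),
      Real.sqrt_mul (hf a (Finset.mem_cons.mpr (Or.inl rfl)))]

lemma olsAux_Xbound (m p : ℕ) (X : Matrix (Fin m) (Fin p) ℝ) (dmin : ℝ)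
    (hH : (((m : ℝ)⁻¹) • (Xᵀ * X)).IsHermitian)
    (hdmin : IsLeast (Set.range hH.eigenvalues) dmin) (hm : 0 < m) :
    ∀ v : Fin p → ℝ, (m : ℝ) * dmin * (v ⬝ᵥ v) ≤ (X *ᵥ v) ⬝ᵥ (X *ᵥ v) := by
  intro v
  have hm0 : (m : ℝ) ≠ 0 := Nat.cast_ne_zero.mpr hm.ne'
  have h1 : (X *ᵥ v) ⬝ᵥ (X *ᵥ v) = v ⬝ᵥ ((Xᵀ * X) *ᵥ v) := by
    rw [Matrix.dotProduct_mulVec, ← Matrix.mulVec_transpose, Matrix.mulVec_mulVec]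
    exact dotProduct_comm _ _
  have h2 : (Xᵀ * X) *ᵥ v = (m : ℝ) • ((((m : ℝ)⁻¹) • (Xᵀ * X)) *ᵥ v) := by
    rw [Matrix.smul_mulVec, smul_smul, mul_inv_cancel₀ hm0, one_smul]
  rw [h1, h2, dotProduct_smul, smul_eq_mul]
  set w : Fin p → ℝ :=
    (star (hH.eigenvectorUnitary : Matrix (Fin p) (Fin p) ℝ)) *ᵥ v with hwdef
  have h3 : v ⬝ᵥ ((((m : ℝ)⁻¹) • (Xᵀ * X)) *ᵥ v) = ∑ i, hH.eigenvalues i * w i ^ 2 :=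
    quadform_eigen hH v
  have h4 : dmin * (v ⬝ᵥ v) ≤ ∑ i, hH.eigenvalues i * w i ^ 2 := by
    have h5 : w ⬝ᵥ w = v ⬝ᵥ v := dot_star_unitary (hH.eigenvectorUnitary).2 v
    have h6 : dmin * (v ⬝ᵥ v) = ∑ i, dmin * w i ^ 2 := by
      rw [← Finset.mul_sum, ← h5]
      congr 1
      simp [dotProduct, sq]
    rw [h6]
    refine Finset.sum_le_sum fun i _ => ?_
    exact mul_le_mul_of_nonneg_right (hdmin.2 ⟨i, rfl⟩) (sq_nonneg _)
  rw [h3]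
  calc (m : ℝ) * dmin * (v ⬝ᵥ v) = (m : ℝ) * (dmin * (v ⬝ᵥ v)) := by ring
    _ ≤ (m : ℝ) * ∑ i, hH.eigenvalues i * w i ^ 2 :=
        mul_le_mul_of_nonneg_left h4 (Nat.cast_nonneg m)

lemma olsAux_sep (p : ℕ) (ε : ℝ) (hε : 0 < ε) (β0 β1 u : Fin p → ℝ)
    (hsep : ε * Real.sqrt p ≤ Real.sqrt (∑ k, (β1 k - β0 k) ^ 2))
    (hev : Real.sqrt (∑ k, (u k - β0 k) ^ 2) ≤ ε * Real.sqrt p / 2) :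
    ε ^ 2 * p / 4 ≤ (u - β1) ⬝ᵥ (u - β1) := by
  have hnorm : ∀ v : Fin p → ℝ,
      ‖(WithLp.equiv 2 (Fin p → ℝ)).symm v‖ = Real.sqrt (∑ k, v k ^ 2) := by
    intro v
    rw [EuclideanSpace.norm_eq]
    congr 1
    exact Finset.sum_congr rfl fun k _ => by rw [Real.norm_eq_abs, sq_abs]; rfl
  have htri : Real.sqrt (∑ k, (β1 k - β0 k) ^ 2) ≤
      Real.sqrt (∑ k, (β1 k - u k) ^ 2) + Real.sqrt (∑ k, (u k - β0 k) ^ 2) := by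
    have := norm_sub_le_norm_sub_add_norm_sub
      ((WithLp.equiv 2 (Fin p → ℝ)).symm β1) ((WithLp.equiv 2 (Fin p → ℝ)).symm u)
      ((WithLp.equiv 2 (Fin p → ℝ)).symm β0)
    rw [← hnorm, ← hnorm, ← hnorm]
    exact this
  have hs1 : ε * Real.sqrt p / 2 ≤ Real.sqrt (∑ k, (β1 k - u k) ^ 2) := by linarith
  have hs0 : 0 ≤ ε * Real.sqrt p / 2 := by positivity
  have hsq : (ε * Real.sqrt p / 2) ^ 2 ≤ (∑ k, (β1 k - u k) ^ 2) := by
    calc (ε * Real.sqrt p / 2) ^ 2 ≤ Real.sqrt (∑ k, (β1 k - u k) ^ 2) ^ 2 :=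
          pow_le_pow_left₀ hs0 hs1 2
      _ = ∑ k, (β1 k - u k) ^ 2 :=
          Real.sq_sqrt (Finset.sum_nonneg fun k _ => sq_nonneg _)
  have heq1 : (ε * Real.sqrt p / 2) ^ 2 = ε ^ 2 * p / 4 := by
    have : Real.sqrt p ^ 2 = (p : ℝ) := Real.sq_sqrt (Nat.cast_nonneg p)
    nlinarith [this]
  have heq2 : (∑ k, (β1 k - u k) ^ 2) = (u - β1) ⬝ᵥ (u - β1) := by
    simp only [dotProduct, Pi.sub_apply]
    exact Finset.sum_congr rfl fun k _ => by ring
  linarith [heq1 ▸ hsq, heq2 ▸ hsq]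
lemma olsAux_integral (m p : ℕ) (σ2 : ℝ) (hσ2 : 0 < σ2) (M : Matrix (Fin m) (Fin m) ℝ)
    (hMherm : M.IsHermitian) (hd : ∀ i, 0 < hMherm.eigenvalues i) (c : ℝ) (hc : 0 ≤ c) :
    ∫⁻ ξ : Fin m → ℝ, ENNReal.ofReal (c * Real.exp (-(ξ ⬝ᵥ (M *ᵥ ξ)) / (2 * σ2)))
      = ENNReal.ofReal (c * ∏ i, Real.sqrt (Real.pi / (hMherm.eigenvalues i / (2 * σ2)))) := by
  set U : Matrix (Fin m) (Fin m) ℝ :=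
    (hMherm.eigenvectorUnitary : Matrix (Fin m) (Fin m) ℝ) with hUdef
  set d : Fin m → ℝ := hMherm.eigenvalues with hddef
  set b : Fin m → ℝ := fun i => d i / (2 * σ2) with hbdef
  have hb : ∀ i, 0 < b i := fun i => div_pos (hd i) (by linarith)
  have hUmem : U ∈ Matrix.unitaryGroup (Fin m) ℝ := (hMherm.eigenvectorUnitary).2
  have hdet2 : U.det * U.det = 1 := by
    have h := (Matrix.mem_unitaryGroup_iff').mp hUmem
    have := congrArg Matrix.det h
    rwa [Matrix.det_mul, Matrix.star_eq_conjTranspose,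
      Matrix.conjTranspose_eq_transpose_of_trivial, Matrix.det_transpose, Matrix.det_one] at this
  have hdetne : U.det ≠ 0 := by
    intro h; rw [h, mul_zero] at hdet2; exact zero_ne_one hdet2
  have habs : |U.det| = 1 := by
    have h2 : U.det ^ 2 = 1 := by rw [sq]; exact hdet2
    have := abs_pow U.det 2
    rw [h2, abs_one] at this
    nlinarith [abs_nonneg U.det]
  have hpres : MeasurePreserving (Matrix.toLin' U) (volume : Measure (Fin m → ℝ)) volume := by
    refine ⟨(Matrix.toLin' U).continuous_of_finiteDimensional.measurable, ?_⟩
    rw [Real.map_matrix_volume_pi_eq_smul_volume_pi hdetne, abs_inv, habs]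
    simp
  have hfmeas : Measurable fun ξ : Fin m → ℝ =>
      ENNReal.ofReal (c * Real.exp (-(ξ ⬝ᵥ (M *ᵥ ξ)) / (2 * σ2))) := by
    have hcont : Continuous fun ξ : Fin m → ℝ => c * Real.exp (-(ξ ⬝ᵥ (M *ᵥ ξ)) / (2 * σ2)) :=
      continuous_const.mul (Real.continuous_exp.comp (((continuous_quadform M).neg).div_const _))
    exact ENNReal.measurable_ofReal.comp hcont.measurable
  rw [← hpres.lintegral_comp hfmeas]
  have hqUη : ∀ η : Fin m → ℝ,
      (Matrix.toLin' U η) ⬝ᵥ (M *ᵥ (Matrix.toLin' U η)) = ∑ i, d i * η i ^ 2 := by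
    intro η
    rw [Matrix.toLin'_apply, quadform_eigen hMherm (U *ᵥ η)]
    have : (star U) *ᵥ (U *ᵥ η) = η := by
      rw [Matrix.mulVec_mulVec, (Matrix.mem_unitaryGroup_iff').mp hUmem, Matrix.one_mulVec]
    rw [← hUdef, this]
  simp_rw [hqUη]
  have hexp : ∀ η : Fin m → ℝ, Real.exp (-(∑ i, d i * η i ^ 2) / (2 * σ2))
      = ∏ i, Real.exp (-(b i) * η i ^ 2) := by
    intro η
    rw [← Real.exp_sum]
    congr 1
    rw [neg_div, Finset.sum_div, ← Finset.sum_neg_distrib]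
    exact Finset.sum_congr rfl fun i _ => by rw [hbdef]; ring
  simp_rw [hexp]
  have hcont2 : Continuous fun η : Fin m → ℝ => ∏ i, Real.exp (-(b i) * η i ^ 2) :=
    continuous_finset_prod _ fun i _ =>
      Real.continuous_exp.comp (continuous_const.mul ((continuous_apply i).pow 2))
  have hint : Integrable (fun η : Fin m → ℝ => ∏ i, Real.exp (-(b i) * η i ^ 2)) :=
    Integrable.fintype_prod (f := fun i (x : ℝ) => Real.exp (-(b i) * x ^ 2))
      (fun i => integrable_exp_neg_mul_sq (hb i))
  calc ∫⁻ η : Fin m → ℝ, ENNReal.ofReal (c * ∏ i, Real.exp (-(b i) * η i ^ 2))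
      = ENNReal.ofReal c * ∫⁻ η : Fin m → ℝ,
          ENNReal.ofReal (∏ i, Real.exp (-(b i) * η i ^ 2)) := by
        simp_rw [ENNReal.ofReal_mul hc]
        exact lintegral_const_mul _ (ENNReal.measurable_ofReal.comp hcont2.measurable)
    _ = ENNReal.ofReal c *
          ENNReal.ofReal (∫ η : Fin m → ℝ, ∏ i, Real.exp (-(b i) * η i ^ 2)) := by
        rw [← ofReal_integral_eq_lintegral_ofReal hint (Filter.Eventually.of_forall fun η =>
          Finset.prod_nonneg fun i _ => (Real.exp_pos _).le)]
    _ = ENNReal.ofReal (c * ∏ i, Real.sqrt (Real.pi / b i)) := by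
        rw [integral_fintype_prod_volume_eq_prod (f := fun i (x : ℝ) => Real.exp (-(b i) * x ^ 2))]
        simp_rw [integral_gaussian]
        rw [← ENNReal.ofReal_mul hc]
lemma olsAux_prod (m p : ℕ) (σ2 : ℝ) (hσ2 : 0 < σ2) (d : Fin m → ℝ) (hd : ∀ i, 0 < d i)
    (hprod : ∏ i, d i = (2⁻¹ : ℝ) ^ p) :
    (2 * Real.pi * σ2) ^ (-(m : ℝ) / 2) * ∏ i, Real.sqrt (Real.pi / (d i / (2 * σ2)))
      = (2 : ℝ) ^ ((p : ℝ) / 2) := by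
  have hA : (0 : ℝ) < 2 * Real.pi * σ2 := by positivity
  have h1 : ∀ i, Real.pi / (d i / (2 * σ2)) = (2 * Real.pi * σ2) / d i := by
    intro i
    rw [div_div_eq_mul_div]
    ring_nf
  simp_rw [h1]
  rw [prod_sqrt _ _ (fun i _ => le_of_lt (div_pos hA (hd i)))]
  have h2 : (∏ i, (2 * Real.pi * σ2) / d i) = (2 * Real.pi * σ2) ^ m * 2 ^ p := by
    rw [Finset.prod_div_distrib, Finset.prod_const, Finset.card_univ, Fintype.card_fin, hprod,
      inv_pow, div_inv_eq_mul]
  rw [h2, Real.sqrt_mul (by positivity)]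
  have h3 : Real.sqrt ((2 * Real.pi * σ2) ^ m) = (2 * Real.pi * σ2) ^ ((m : ℝ) / 2) := by
    rw [Real.sqrt_eq_rpow, ← Real.rpow_natCast (2 * Real.pi * σ2) m, ← Real.rpow_mul hA.le]
    congr 1
    ring
  have h4 : Real.sqrt ((2 : ℝ) ^ p) = (2 : ℝ) ^ ((p : ℝ) / 2) := by
    rw [Real.sqrt_eq_rpow, ← Real.rpow_natCast (2 : ℝ) p, ← Real.rpow_mul (by norm_num : (0:ℝ) ≤ 2)]
    congr 1
    ring
  rw [h3, h4, ← mul_assoc, ← Real.rpow_add hA]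
  rw [show -(m:ℝ)/2 + (m:ℝ)/2 = 0 by ring, Real.rpow_zero, one_mul]

lemma olsAux_exp (m p : ℕ) (hm : 0 < m) (σ2 ε dmin : ℝ) (hσ2 : 0 < σ2) :
    Real.exp (-((m : ℝ) * dmin * ε ^ 2 * p / 4 / (4 * σ2))) * (2 : ℝ) ^ ((p : ℝ) / 2)
      = Real.exp (-(ε ^ 2 * dmin / (16 * σ2) - Real.log 2 / (2 * m)) * m * p) := by
  rw [Real.rpow_def_of_pos (by norm_num : (0 : ℝ) < 2), ← Real.exp_add]
  congr 1
  have hm0 : (m : ℝ) ≠ 0 := Nat.cast_ne_zero.mpr hm.ne'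
  field_simp
  ring

/-- If `d_min > 0` is the smallest eigenvalue of `(1/m)XᵀX` and `‖β¹-β⁰‖₂ ≥ ε√p`, then
under the alternative `y ∼ N(Xβ¹, σ²I_m)`,
`P(‖β̂(y)-β⁰‖₂ ≤ ε√p/2) ≤ exp{-(ε²d_min/(16σ²) - log 2/(2m)) m p}`. -/
theorem ols_deviation_bound_alternative (m p : ℕ) (hmp : p ≤ m)
    (X : Matrix (Fin m) (Fin p) ℝ) (hX : IsUnit (Xᵀ * X).det)
    (dmin σ2 ε : ℝ) (hσ2 : 0 < σ2) (hε : 0 < ε)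
    (hH : (((m : ℝ)⁻¹) • (Xᵀ * X)).IsHermitian)
    (hdmin : IsLeast (Set.range hH.eigenvalues) dmin) (hdpos : 0 < dmin)
    (β0 β1 : Fin p → ℝ)
    (hsep : ε * Real.sqrt p ≤ Real.sqrt (∑ k, (β1 k - β0 k) ^ 2)) :
    gaussMeasure m (X.mulVec β1) σ2
        {y | Real.sqrt (∑ k, (ols m p X y k - β0 k) ^ 2) ≤ ε * Real.sqrt p / 2}
      ≤ ENNReal.ofReal
          (Real.exp (-(ε ^ 2 * dmin / (16 * σ2) - Real.log 2 / (2 * m)) * m * p)) := by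
  classical
  have hp : 0 < p := by
    rcases hdmin.1 with ⟨i, -⟩
    exact i.pos
  have hm : 0 < m := lt_of_lt_of_le hp hmp
  set B := (Xᵀ * X)⁻¹ with hBdef
  set P := X * B * Xᵀ with hPdef
  set M : Matrix (Fin m) (Fin m) ℝ := 1 - (2⁻¹ : ℝ) • P with hMdef
  have h1 : B * (Xᵀ * X) = 1 := Matrix.nonsing_inv_mul _ hX
  have h2 : (Xᵀ * X) * B = 1 := Matrix.mul_nonsing_inv _ hX
  have hBt : Bᵀ = B := by
    rw [hBdef, Matrix.transpose_nonsing_inv, Matrix.transpose_mul, Matrix.transpose_transpose]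
  have hPt : Pᵀ = P := by
    rw [hPdef, Matrix.transpose_mul, Matrix.transpose_mul, Matrix.transpose_transpose, hBt,
      Matrix.mul_assoc]
  have hPP : P * P = P := by
    rw [hPdef]
    simp only [Matrix.mul_assoc]
    rw [← Matrix.mul_assoc Xᵀ X (B * Xᵀ), ← Matrix.mul_assoc (Xᵀ * X) B Xᵀ, h2, Matrix.one_mul]
  have hMherm : M.IsHermitian := by
    rw [Matrix.IsHermitian, Matrix.conjTranspose_eq_transpose_of_trivial, hMdef,
      Matrix.transpose_sub, Matrix.transpose_one, Matrix.transpose_smul, hPt]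
  have key1 : ∀ v, (P *ᵥ v) ⬝ᵥ (P *ᵥ v) = v ⬝ᵥ (P *ᵥ v) := by
    intro v
    rw [Matrix.dotProduct_mulVec, ← Matrix.mulVec_transpose, hPt, Matrix.mulVec_mulVec, hPP]
    exact dotProduct_comm _ _
  have hqf : ∀ v, v ⬝ᵥ (M *ᵥ v) = v ⬝ᵥ v - 2⁻¹ * (v ⬝ᵥ (P *ᵥ v)) := by
    intro v
    rw [hMdef, Matrix.sub_mulVec, Matrix.one_mulVec, dotProduct_sub,
      Matrix.smul_mulVec, dotProduct_smul, smul_eq_mul]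
  have hPle : ∀ v : Fin m → ℝ, v ⬝ᵥ (P *ᵥ v) ≤ v ⬝ᵥ v := by
    intro v
    have h0 : 0 ≤ (v - P *ᵥ v) ⬝ᵥ (v - P *ᵥ v) :=
      Finset.sum_nonneg fun i _ => mul_self_nonneg _
    have hexp : (v - P *ᵥ v) ⬝ᵥ (v - P *ᵥ v) = v ⬝ᵥ v - v ⬝ᵥ (P *ᵥ v) := by
      rw [sub_dotProduct, dotProduct_sub, dotProduct_sub, key1,
        dotProduct_comm (P *ᵥ v) v]
      ring
    linarith [hexp ▸ h0]
  have hdetM : M.det = (2⁻¹ : ℝ) ^ p := by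
    have : M = 1 + X * ((-(2⁻¹ : ℝ)) • (B * Xᵀ)) := by
      rw [hMdef, hPdef, Matrix.mul_smul, neg_smul, ← sub_eq_add_neg, Matrix.mul_assoc]
    rw [this, Matrix.det_one_add_mul_comm]
    have : (-(2⁻¹ : ℝ)) • (B * Xᵀ) * X = (-(2⁻¹ : ℝ)) • (1 : Matrix (Fin p) (Fin p) ℝ) := by
      rw [Matrix.smul_mul, Matrix.mul_assoc, h1]
    rw [this]
    have : (1 : Matrix (Fin p) (Fin p) ℝ) + (-(2⁻¹ : ℝ)) • 1 = ((2⁻¹ : ℝ)) • 1 := by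
      module
    rw [this, Matrix.det_smul, Matrix.det_one, mul_one, Fintype.card_fin]
  set d : Fin m → ℝ := hMherm.eigenvalues with hddef
  have hMpos : M.PosDef := by
    refine Matrix.PosDef.of_dotProduct_mulVec_pos hMherm fun x hx => ?_
    have hsx : star x = x := by funext i; simp
    rw [hsx, hqf x]
    have h5 := hPle x
    have hxx : 0 < x ⬝ᵥ x := by
      rcases lt_or_eq_of_le (Finset.sum_nonneg fun i (_ : i ∈ Finset.univ) =>
        mul_self_nonneg (x i)) with h | h
      · exact h
      · exact absurd (dotProduct_self_eq_zero.mp h.symm) hx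
    linarith
  have hd : ∀ i, 0 < d i := fun i => hMpos.eigenvalues_pos i
  have hprod : ∏ i, d i = (2⁻¹ : ℝ) ^ p := by
    have h6 := hMherm.det_eq_prod_eigenvalues
    rw [hdetM] at h6
    simpa using h6.symm
  have hXols : ∀ y : Fin m → ℝ,
      X *ᵥ (ols m p X y - β1) = P *ᵥ (y - X *ᵥ β1) := by
    intro y
    have hlhs : X *ᵥ (ols m p X y - β1) = P *ᵥ y - X *ᵥ β1 := by
      rw [Matrix.mulVec_sub]
      congr 1
      show X *ᵥ (B *ᵥ (Xᵀ *ᵥ y)) = P *ᵥ y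
      rw [Matrix.mulVec_mulVec, Matrix.mulVec_mulVec, hPdef]
    have hrhs : P *ᵥ (y - X *ᵥ β1) = P *ᵥ y - X *ᵥ β1 := by
      rw [Matrix.mulVec_sub]
      congr 1
      rw [Matrix.mulVec_mulVec]
      have : P * X = X := by
        rw [hPdef, Matrix.mul_assoc, Matrix.mul_assoc, h1, Matrix.mul_one]
      rw [this]
    rw [hlhs, hrhs]
  set μ1 : Fin m → ℝ := X *ᵥ β1 with hμ1def
  set t : ℝ := (m : ℝ) * dmin * ε ^ 2 * (p : ℝ) / 4 with htdef
  set c : ℝ := (2 * Real.pi * σ2) ^ (-(m : ℝ) / 2) with hcdef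
  have hc : 0 ≤ c := Real.rpow_nonneg (by positivity) _
  set E : Set (Fin m → ℝ) :=
    {y | Real.sqrt (∑ k, (ols m p X y k - β0 k) ^ 2) ≤ ε * Real.sqrt p / 2} with hEdef
  have hols : Continuous (ols m p X) := by
    show Continuous fun y => (Xᵀ * X)⁻¹ *ᵥ (Xᵀ *ᵥ y)
    exact (continuous_mulVec' _).comp (continuous_mulVec' _)
  have hEmeas : MeasurableSet E := by
    have hcontf : Continuous fun y : Fin m → ℝ =>
        Real.sqrt (∑ k, (ols m p X y k - β0 k) ^ 2) :=
      Real.continuous_sqrt.comp (continuous_finset_sum _ fun k _ =>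
        (((continuous_apply k).comp hols).sub continuous_const).pow 2)
    exact measurableSet_le hcontf.measurable measurable_const
  have hEbound : ∀ y ∈ E, t ≤ (y - μ1) ⬝ᵥ (P *ᵥ (y - μ1)) := by
    intro y hy
    have hD := olsAux_sep p ε hε β0 β1 (ols m p X y) hsep hy
    have hC := olsAux_Xbound m p X dmin hH hdmin hm (ols m p X y - β1)
    rw [hXols y, key1] at hC
    have h7 : t ≤ (m : ℝ) * dmin *
        ((ols m p X y - β1) ⬝ᵥ (ols m p X y - β1)) := by
      have h0 : (0 : ℝ) ≤ (m : ℝ) * dmin := by positivity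
      calc t = ((m : ℝ) * dmin) * (ε ^ 2 * p / 4) := by rw [htdef]; ring
        _ ≤ ((m : ℝ) * dmin) * ((ols m p X y - β1) ⬝ᵥ (ols m p X y - β1)) :=
            mul_le_mul_of_nonneg_left hD h0
        _ = (m : ℝ) * dmin * ((ols m p X y - β1) ⬝ᵥ (ols m p X y - β1)) := by ring
    linarith
  have hpt : ∀ y ∈ E, gaussDensity m μ1 σ2 y ≤
      Real.exp (-(t / (4 * σ2))) *
        (c * Real.exp (-((y - μ1) ⬝ᵥ (M *ᵥ (y - μ1))) / (2 * σ2))) := by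
    intro y hy
    have hsum : ∑ i, (y i - μ1 i) ^ 2 = (y - μ1) ⬝ᵥ (y - μ1) := by
      simp [dotProduct, Pi.sub_apply, pow_two]
    have hq := hqf (y - μ1)
    have hr := hEbound y hy
    have hmain : Real.exp (-(∑ i, (y i - μ1 i) ^ 2) / (2 * σ2)) ≤
        Real.exp (-(t / (4 * σ2))) *
          Real.exp (-((y - μ1) ⬝ᵥ (M *ᵥ (y - μ1))) / (2 * σ2)) := by
      rw [← Real.exp_add]
      apply Real.exp_le_exp.mpr
      rw [hsum]
      have h8 : (y - μ1) ⬝ᵥ (M *ᵥ (y - μ1)) + t / 2 ≤ (y - μ1) ⬝ᵥ (y - μ1) := by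
        rw [hq]; linarith
      have h9 : -((y - μ1) ⬝ᵥ (y - μ1)) / (2 * σ2) ≤
          -((y - μ1) ⬝ᵥ (M *ᵥ (y - μ1)) + t / 2) / (2 * σ2) := by
        gcongr
      calc -((y - μ1) ⬝ᵥ (y - μ1)) / (2 * σ2)
          ≤ -((y - μ1) ⬝ᵥ (M *ᵥ (y - μ1)) + t / 2) / (2 * σ2) := h9
        _ = -(t / (4 * σ2)) + -((y - μ1) ⬝ᵥ (M *ᵥ (y - μ1))) / (2 * σ2) := by
            field_simp
            ring
    show c * Real.exp (-(∑ i, (y i - μ1 i) ^ 2) / (2 * σ2)) ≤ _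
    calc c * Real.exp (-(∑ i, (y i - μ1 i) ^ 2) / (2 * σ2))
        ≤ c * (Real.exp (-(t / (4 * σ2))) *
            Real.exp (-((y - μ1) ⬝ᵥ (M *ᵥ (y - μ1))) / (2 * σ2))) :=
          mul_le_mul_of_nonneg_left hmain hc
      _ = Real.exp (-(t / (4 * σ2))) *
            (c * Real.exp (-((y - μ1) ⬝ᵥ (M *ᵥ (y - μ1))) / (2 * σ2))) := by ring
  have hcontG : Continuous fun y : Fin m → ℝ =>
      c * Real.exp (-((y - μ1) ⬝ᵥ (M *ᵥ (y - μ1))) / (2 * σ2)) := by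
    have hsub : Continuous fun y : Fin m → ℝ => y - μ1 :=
      continuous_pi fun i => (continuous_apply i).sub continuous_const
    exact continuous_const.mul (Real.continuous_exp.comp
      ((((continuous_quadform M).comp hsub).neg).div_const _))
  have hmeas3 : Measurable fun y : Fin m → ℝ =>
      ENNReal.ofReal (c * Real.exp (-((y - μ1) ⬝ᵥ (M *ᵥ (y - μ1))) / (2 * σ2))) :=
    ENNReal.measurable_ofReal.comp hcontG.measurable
  have hmeas4 : Measurable fun ξ : Fin m → ℝ =>
      ENNReal.ofReal (c * Real.exp (-(ξ ⬝ᵥ (M *ᵥ ξ)) / (2 * σ2))) :=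
    ENNReal.measurable_ofReal.comp (continuous_const.mul (Real.continuous_exp.comp
      (((continuous_quadform M).neg).div_const _))).measurable
  calc gaussMeasure m μ1 σ2 E
      = ∫⁻ y in E, ENNReal.ofReal (gaussDensity m μ1 σ2 y) :=
        withDensity_apply _ hEmeas
    _ ≤ ∫⁻ y in E, ENNReal.ofReal (Real.exp (-(t / (4 * σ2))) *
          (c * Real.exp (-((y - μ1) ⬝ᵥ (M *ᵥ (y - μ1))) / (2 * σ2)))) := by
        refine setLIntegral_mono ?_ fun y hy => ENNReal.ofReal_le_ofReal (hpt y hy)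
        exact ENNReal.measurable_ofReal.comp (continuous_const.mul hcontG).measurable
    _ ≤ ∫⁻ y, ENNReal.ofReal (Real.exp (-(t / (4 * σ2))) *
          (c * Real.exp (-((y - μ1) ⬝ᵥ (M *ᵥ (y - μ1))) / (2 * σ2)))) :=
        setLIntegral_le_lintegral _ _
    _ = ENNReal.ofReal (Real.exp (-(t / (4 * σ2)))) *
          ∫⁻ y, ENNReal.ofReal
            (c * Real.exp (-((y - μ1) ⬝ᵥ (M *ᵥ (y - μ1))) / (2 * σ2))) := by
        simp_rw [ENNReal.ofReal_mul (Real.exp_nonneg _)]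
        exact lintegral_const_mul _ hmeas3
    _ = ENNReal.ofReal (Real.exp (-(t / (4 * σ2)))) *
          ∫⁻ ξ, ENNReal.ofReal (c * Real.exp (-(ξ ⬝ᵥ (M *ᵥ ξ)) / (2 * σ2))) := by
        congr 1
        exact (measurePreserving_sub_right volume μ1).lintegral_comp hmeas4
    _ = ENNReal.ofReal (Real.exp (-(t / (4 * σ2)))) *
          ENNReal.ofReal (c * ∏ i, Real.sqrt (Real.pi / (d i / (2 * σ2)))) := by
        rw [olsAux_integral m p σ2 hσ2 M hMherm hd c hc]
    _ = ENNReal.ofReal (Real.exp (-(t / (4 * σ2))) *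
          (c * ∏ i, Real.sqrt (Real.pi / (d i / (2 * σ2))))) :=
        (ENNReal.ofReal_mul (Real.exp_nonneg _)).symm
    _ = ENNReal.ofReal
          (Real.exp (-(ε ^ 2 * dmin / (16 * σ2) - Real.log 2 / (2 * m)) * m * p)) := by
        congr 1
        rw [hcdef, olsAux_prod m p σ2 hσ2 d hd hprod, htdef]
        exact olsAux_exp m p hm σ2 ε dmin hσ2
end
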